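/- arXiv:1107.0500 — 5 statements merged into one kernel-verified Lean document; each statement's English description precedes it below -/
import Mathlib

section
/- If X₁, ..., X_k are pairwise commuting 2N×2N complex matrices, each satisfying X_j* = X_j^♯, then there exists a single symplectic unitary U such that for all j, U* X_j U has block form [[T_j, S_j], [-conj(S_j), conj(T_j)]] with T_j upper-triangular and S_j strictly upper-triangular. -/
open Matrix
open scoped InnerProductSpace

noncomputable def Zmat (N : ℕ) : Matrix (Fin N ⊕ Fin N) (Fin N ⊕ Fin N) ℂ :=
  Matrix.fromBlocks 0 1 (-1) 0

noncomputable def dual {N : ℕ} (X : Matrix (Fin N ⊕ Fin N) (Fin N ⊕ Fin N) ℂ) :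
    Matrix (Fin N ⊕ Fin N) (Fin N ⊕ Fin N) ℂ :=
  -(Zmat N) * Xᵀ * (Zmat N)

noncomputable def Tmap {N : ℕ} (ξ : Fin N ⊕ Fin N → ℂ) : Fin N ⊕ Fin N → ℂ :=
  Sum.elim (fun i => -(starRingEnd ℂ) (ξ (Sum.inr i))) (fun i => (starRingEnd ℂ) (ξ (Sum.inl i)))

abbrev QV (N : ℕ) := EuclideanSpace ℂ (Fin N ⊕ Fin N)

noncomputable def Jmap {N : ℕ} (v : QV N) : QV N := WithLp.toLp 2 (Tmap v)

variable {N : ℕ}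

lemma jmap_apply_inl (v : QV N) (i : Fin N) :
    Jmap v (Sum.inl i) = -(starRingEnd ℂ) (v (Sum.inr i)) := rfl

lemma jmap_apply_inr (v : QV N) (i : Fin N) :
    Jmap v (Sum.inr i) = (starRingEnd ℂ) (v (Sum.inl i)) := rfl

lemma jmap_jmap (v : QV N) : Jmap (Jmap v) = -v := by
  ext i; cases i <;> simp [Jmap, Tmap]

lemma jmap_add (x y : QV N) : Jmap (x + y) = Jmap x + Jmap y := by
  ext i; cases i <;> simp [Jmap, Tmap] <;> ring

lemma jmap_smul (c : ℂ) (x : QV N) : Jmap (c • x) = (starRingEnd ℂ) c • Jmap x := by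
  ext i; cases i <;> simp [Jmap, Tmap] <;> ring

lemma jmap_zero : Jmap (0 : QV N) = 0 := by
  ext i; cases i <;> simp [Jmap, Tmap]

lemma inner_jmap_jmap (x y : QV N) :
    ⟪Jmap x, Jmap y⟫_ℂ = (starRingEnd ℂ) ⟪x, y⟫_ℂ := by
  simp [PiLp.inner_apply, RCLike.inner_apply, Jmap, Tmap, Fintype.sum_sum_type, mul_comm]
  ring

lemma inner_jmap_self (x : QV N) : ⟪x, Jmap x⟫_ℂ = 0 := by
  simp [PiLp.inner_apply, RCLike.inner_apply, Jmap, Tmap, Fintype.sum_sum_type, mul_comm]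

lemma inner_span_zero {u : QV N} {s : Set (QV N)} (h : ∀ x ∈ s, ⟪u, x⟫_ℂ = 0) :
    ∀ w ∈ Submodule.span ℂ s, ⟪u, w⟫_ℂ = 0 := by
  intro w hw
  induction hw using Submodule.span_induction with
  | mem x hx => exact h x hx
  | zero => simp
  | add x y _ _ hx hy => rw [inner_add_right, hx, hy, add_zero]
  | smul c x _ hx => rw [inner_smul_right, hx, mul_zero]

/-- span of the first `t` basis pairs -/
noncomputable def Wspan {m : ℕ} (e : Fin m → QV N) (t : ℕ) : Submodule ℂ (QV N) :=
  Submodule.span ℂ {v | ∃ i : Fin m, i.val < t ∧ (v = e i ∨ v = Jmap (e i))}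

lemma Wspan_mono {m : ℕ} (e : Fin m → QV N) {t t' : ℕ} (h : t ≤ t') :
    Wspan e t ≤ Wspan e t' := by
  apply Submodule.span_mono
  rintro v ⟨i, hi, hv⟩
  exact ⟨i, lt_of_lt_of_le hi h, hv⟩

lemma jmap_mem_wspan {m : ℕ} (e : Fin m → QV N) (t : ℕ) :
    ∀ v ∈ Wspan e t, Jmap v ∈ Wspan e t := by
  intro v hv
  induction hv using Submodule.span_induction with
  | mem x hx =>
    obtain ⟨i, hi, h | h⟩ := hx
    · exact Submodule.subset_span ⟨i, hi, Or.inr (by rw [h])⟩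
    · rw [h, jmap_jmap]
      exact neg_mem (Submodule.subset_span ⟨i, hi, Or.inl rfl⟩)
  | zero => rw [jmap_zero]; exact zero_mem _
  | add x y _ _ hx hy => rw [jmap_add]; exact add_mem hx hy
  | smul c x _ hx => rw [jmap_smul]; exact Submodule.smul_mem _ _ hx

universe u

lemma exists_common_eigenvector : ∀ (m : ℕ) (W : Type u) [AddCommGroup W] [Module ℂ W]
    [FiniteDimensional ℂ W] [Nontrivial W] (f : Fin m → Module.End ℂ W),
    (∀ i j, Commute (f i) (f j)) →
    ∃ v : W, v ≠ 0 ∧ ∀ i, ∃ μ : ℂ, f i v = μ • v := by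
  intro m
  induction m with
  | zero =>
    intro W _ _ _ _ f _
    obtain ⟨v, hv⟩ := exists_ne (0 : W)
    exact ⟨v, hv, fun i => i.elim0⟩
  | succ m ih =>
    intro W _ _ _ _ f hf
    obtain ⟨μ, hμ⟩ := Module.End.exists_eigenvalue (f 0)
    obtain ⟨w, hw⟩ := hμ.exists_hasEigenvector
    set E := Module.End.eigenspace (f 0) μ with hE
    have hwE : w ∈ E := hw.1
    have hEnt : Nontrivial E := Submodule.nontrivial_iff_ne_bot.mpr
      (fun h => hw.2 ((Submodule.mem_bot ℂ).mp (h ▸ hwE)))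
    have hinv : ∀ i : Fin m, ∀ v ∈ E, f i.succ v ∈ E := by
      intro i v hv
      have h2 : f 0 (f i.succ v) = f i.succ (f 0 v) := by
        have h3 := LinearMap.congr_fun ((hf 0 i.succ) : _ = _) v
        simpa [Module.End.mul_apply] using h3
      rw [Module.End.mem_eigenspace_iff] at hv ⊢
      rw [h2, hv, _root_.map_smul]
    let g : Fin m → Module.End ℂ E := fun i => (f i.succ).restrict (hinv i)
    have hg : ∀ i j, Commute (g i) (g j) := by
      intro i j
      ext v
      have h2 := LinearMap.congr_fun ((hf i.succ j.succ) : _ = _) (v : W)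
      simp only [Module.End.mul_apply] at h2
      simp [g, Module.End.mul_apply, LinearMap.restrict_apply, h2]
    obtain ⟨v, hv0, hvp⟩ := ih E g hg
    refine ⟨(v : W), by simpa using hv0, ?_⟩
    intro i
    rcases Fin.eq_zero_or_eq_succ i with h0 | ⟨j, hj⟩
    · exact ⟨μ, by rw [h0]; exact Module.End.mem_eigenspace_iff.mp v.2⟩
    · obtain ⟨ν, hν⟩ := hvp j
      refine ⟨ν, ?_⟩
      rw [hj]
      have h4 := congrArg (Subtype.val) hν
      simpa [g, LinearMap.restrict_apply] using h4

/-- matrix action as an endomorphism of Euclidean space -/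
noncomputable def mvE (A : Matrix (Fin N ⊕ Fin N) (Fin N ⊕ Fin N) ℂ) :
    Module.End ℂ (QV N) where
  toFun v := WithLp.toLp 2 (A *ᵥ v)
  map_add' x y := by simp [Matrix.mulVec_add]
  map_smul' c x := by simp [Matrix.mulVec_smul]

lemma mvE_entry (A : Matrix (Fin N ⊕ Fin N) (Fin N ⊕ Fin N) ℂ) (v : QV N)
    (c : Fin N ⊕ Fin N) : mvE A v c = ∑ d, A c d * v d := rfl

lemma mvE_mvE (A B : Matrix (Fin N ⊕ Fin N) (Fin N ⊕ Fin N) ℂ) (v : QV N) :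
    mvE A (mvE B v) = mvE (A * B) v := by
  ext c
  simp only [mvE_entry, Matrix.mul_apply, Finset.sum_mul, Finset.mul_sum]
  rw [Finset.sum_comm]
  congr 1; funext d; congr 1; funext c'; ring

lemma build {k : ℕ} (X : Fin k → Matrix (Fin N ⊕ Fin N) (Fin N ⊕ Fin N) ℂ)
    (hcm : ∀ i j, X i * X j = X j * X i)
    (hrel : ∀ j (v : QV N), mvE (X j) (Jmap v) = Jmap (mvE (X j) v)) :
    ∀ m, m ≤ N → ∃ e : Fin m → QV N,
      (∀ i j, ⟪e i, e j⟫_ℂ = if i = j then 1 else 0) ∧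
      (∀ i j, ⟪e i, Jmap (e j)⟫_ℂ = 0) ∧
      (∀ j (q : Fin m), ∃ μ : ℂ, (mvE (X j) (e q) - μ • (e q)) ∈ Wspan e q.val) := by
  intro m
  induction m with
  | zero =>
    intro _
    exact ⟨fun i => i.elim0, fun i => i.elim0, fun i => i.elim0, fun j q => q.elim0⟩
  | succ m ih =>
    intro hm
    obtain ⟨e, hA, hB, hC⟩ := ih (le_of_lt (Nat.lt_of_succ_le hm))
    set K : Submodule ℂ (QV N) := Wspan e m with hK
    have hgenK : ∀ i : Fin m, e i ∈ K ∧ Jmap (e i) ∈ K := fun i =>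
      ⟨Submodule.subset_span ⟨i, i.isLt, Or.inl rfl⟩,
       Submodule.subset_span ⟨i, i.isLt, Or.inr rfl⟩⟩
    have hKJ : ∀ v ∈ K, Jmap v ∈ K := jmap_mem_wspan e m
    have hgXK : ∀ (j : Fin k) (i : Fin m), mvE (X j) (e i) ∈ K := by
      intro j i
      obtain ⟨μ, hμ⟩ := hC j i
      have h1 : (mvE (X j) (e i) - μ • (e i)) ∈ K := Wspan_mono e (le_of_lt i.isLt) hμ
      have := add_mem h1 (Submodule.smul_mem K μ (hgenK i).1)
      simpa using this
    have hKX : ∀ j, ∀ v ∈ K, mvE (X j) v ∈ K := by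
      intro j v hv
      induction hv using Submodule.span_induction with
      | mem x hx =>
        obtain ⟨i, hi, h | h⟩ := hx
        · rw [h]; exact hgXK j i
        · rw [h, hrel]; exact hKJ _ (hgXK j i)
      | zero => rw [map_zero]; exact zero_mem _
      | add x y _ _ hx hy => rw [map_add]; exact add_mem hx hy
      | smul c x _ hx => rw [_root_.map_smul]; exact Submodule.smul_mem _ _ hx
    have hON : Orthonormal ℂ (Sum.elim e (fun i => Jmap (e i)) : Fin m ⊕ Fin m → QV N) := by
      rw [orthonormal_iff_ite]
      rintro (i | i) (j | j)
      · simpa using hA i j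
      · simpa using hB i j
      · have h2 : ⟪Jmap (e i), e j⟫_ℂ = 0 := by
          rw [← inner_conj_symm, hB j i, map_zero]
        simpa using h2
      · have := inner_jmap_jmap (e i) (e j)
        rw [hA i j] at this
        simpa [apply_ite (starRingEnd ℂ)] using this
    have hKrange : K = Submodule.span ℂ (Set.range (Sum.elim e (fun i => Jmap (e i)))) := by
      rw [hK, Wspan]
      congr 1
      ext v
      constructor
      · rintro ⟨i, hi, h | h⟩
        · exact ⟨Sum.inl i, h.symm⟩
        · exact ⟨Sum.inr i, h.symm⟩
      · rintro ⟨(i | i), rfl⟩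
        · exact ⟨i, i.isLt, Or.inl rfl⟩
        · exact ⟨i, i.isLt, Or.inr rfl⟩
    set K' : Submodule ℂ (QV N) := Kᗮ with hK'
    have hfrK : Module.finrank ℂ K = m + m := by
      rw [hKrange, finrank_span_eq_card hON.linearIndependent]
      simp
    have hfrV : Module.finrank ℂ (QV N) = N + N := by
      simp [finrank_euclideanSpace]
    have hfr := Submodule.finrank_add_finrank_orthogonal (K := K)
    rw [← hK', hfrK, hfrV] at hfr
    have hK'nt : Nontrivial K' := by
      rw [← Module.finrank_pos_iff (R := ℂ)]
      have hmN : m < N := Nat.lt_of_succ_le hm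
      omega
    set P := Submodule.orthogonalProjection K' with hP
    set Y : Fin k → Module.End ℂ K' :=
      fun j => (P.toLinearMap).comp ((mvE (X j)).comp K'.subtype) with hY
    have hKbot : K'ᗮ = K := Submodule.orthogonal_orthogonal K
    have hPK : ∀ w ∈ K, P w = 0 := by
      intro w hw
      exact Submodule.orthogonalProjectionOnto_apply_of_mem_orthogonal (hKbot ▸ hw)
    have hYkey : ∀ j (w : QV N), P (mvE (X j) (P w)) = P (mvE (X j) w) := by
      intro j w
      have hd : w - (P w : QV N) ∈ K := hKbot ▸ (Submodule.sub_starProjection_mem_orthogonal (K := K') w : w - (P w : QV N) ∈ K'ᗮ)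
      have h1 : mvE (X j) ((P w : QV N)) = mvE (X j) w - mvE (X j) (w - (P w : QV N)) := by
        rw [map_sub, sub_sub_cancel]
      rw [h1, map_sub, hPK _ (hKX j _ hd), sub_zero]
    have hYcm : ∀ i j, Commute (Y i) (Y j) := by
      intro i j
      refine LinearMap.ext fun v => ?_
      have h1 : ∀ a b : Fin k, (Y a * Y b) v = P (mvE (X a) (P (mvE (X b) (v : QV N)))) := by
        intro a b; rfl
      rw [h1, h1, hYkey, hYkey, mvE_mvE, mvE_mvE, hcm]
    obtain ⟨ξ, hξ0, hξe⟩ := exists_common_eigenvector k K' Y hYcm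
    have hξn : ‖(ξ : QV N)‖ ≠ 0 := by
      simpa using fun h => hξ0 (Subtype.ext h)
    have hξnC : (‖(ξ : QV N)‖ : ℂ) ≠ 0 := by exact_mod_cast hξn
    set ε : QV N := (‖(ξ : QV N)‖ : ℂ)⁻¹ • (ξ : QV N) with hε
    have hεK' : ε ∈ K' := Submodule.smul_mem _ _ ξ.2
    have hεn : ⟪ε, ε⟫_ℂ = 1 := by
      rw [hε, inner_smul_left, inner_smul_right, inner_self_eq_norm_sq_to_K]
      rw [map_inv₀, Complex.conj_ofReal, sq]
      field_simp
      rfl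
    have hεeig : ∀ j, ∃ μ : ℂ, (mvE (X j) ε - μ • ε) ∈ K := by
      intro j
      obtain ⟨μ, hμ⟩ := hξe j
      refine ⟨μ, ?_⟩
      have h1 : P (mvE (X j) (ξ : QV N)) = μ • ξ := hμ
      have h2 : (mvE (X j) (ξ : QV N) - μ • (ξ : QV N)) ∈ K := by
        have h3 : mvE (X j) (ξ : QV N) - (P (mvE (X j) (ξ : QV N)) : QV N) ∈ K'ᗮ :=
          Submodule.sub_starProjection_mem_orthogonal (K := K') _
        rw [h1] at h3
        exact hKbot ▸ h3
      have h4 : (mvE (X j) ε - μ • ε) =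
          (‖(ξ : QV N)‖ : ℂ)⁻¹ • (mvE (X j) (ξ : QV N) - μ • (ξ : QV N)) := by
        rw [hε, _root_.map_smul, smul_sub, smul_comm]
      rw [h4]
      exact Submodule.smul_mem _ _ h2
    have hKK' : ∀ u ∈ K, ∀ w ∈ K', ⟪u, w⟫_ℂ = 0 := by
      intro u hu w hw
      exact (Submodule.mem_orthogonal K w).mp hw u hu
    have hK'K : ∀ w ∈ K', ∀ u ∈ K, ⟪w, u⟫_ℂ = 0 := by
      intro w hw u hu
      rw [← inner_conj_symm, hKK' u hu w hw, map_zero]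
    have hJεK' : Jmap ε ∈ K' := by
      rw [hK']
      intro u hu
      have h1 : u = -(Jmap (Jmap u)) := by rw [jmap_jmap, neg_neg]
      rw [h1, inner_neg_left, inner_jmap_jmap]
      rw [hKK' _ (hKJ u hu) ε hεK', map_zero, neg_zero]
    refine ⟨Fin.snoc e ε, ?_, ?_, ?_⟩
    · intro i j
      rcases Fin.eq_castSucc_or_eq_last i with ⟨i0, rfl⟩ | rfl <;>
        rcases Fin.eq_castSucc_or_eq_last j with ⟨j0, rfl⟩ | rfl
      · simp only [Fin.snoc_castSucc]
        rw [hA i0 j0]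
        simp [Fin.castSucc_inj]
      · simp only [Fin.snoc_castSucc, Fin.snoc_last]
        rw [hKK' _ (hgenK i0).1 ε hεK']
        simp [(Fin.castSucc_lt_last i0).ne]
      · simp only [Fin.snoc_castSucc, Fin.snoc_last]
        rw [hK'K ε hεK' _ (hgenK j0).1]
        simp [(Fin.castSucc_lt_last j0).ne']
      · simp only [Fin.snoc_last]
        rw [hεn]
        simp
    · intro i j
      rcases Fin.eq_castSucc_or_eq_last i with ⟨i0, rfl⟩ | rfl <;>
        rcases Fin.eq_castSucc_or_eq_last j with ⟨j0, rfl⟩ | rfl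
      · simp only [Fin.snoc_castSucc]
        exact hB i0 j0
      · simp only [Fin.snoc_castSucc, Fin.snoc_last]
        exact hKK' _ (hgenK i0).1 _ hJεK'
      · simp only [Fin.snoc_castSucc, Fin.snoc_last]
        exact hK'K ε hεK' _ (hgenK j0).2
      · simp only [Fin.snoc_last]
        exact inner_jmap_self ε
    · intro j q
      have hWle : ∀ t, Wspan e t ≤ Wspan (Fin.snoc e ε : Fin (m+1) → QV N) t := by
        intro t
        apply Submodule.span_mono
        rintro v ⟨i, hi, h | h⟩
        · exact ⟨i.castSucc, hi, Or.inl (by simpa using h)⟩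
        · exact ⟨i.castSucc, hi, Or.inr (by simpa using h)⟩
      rcases Fin.eq_castSucc_or_eq_last q with ⟨q0, rfl⟩ | rfl
      · obtain ⟨μ, hμ⟩ := hC j q0
        refine ⟨μ, ?_⟩
        have := hWle q0.val hμ
        simpa [Fin.snoc_castSucc] using this
      · obtain ⟨μ, hμ⟩ := hεeig j
        refine ⟨μ, ?_⟩
        have h5 : K ≤ Wspan (Fin.snoc e ε : Fin (m+1) → QV N) m := hWle m
        have := h5 hμ
        simpa [Fin.snoc_last, Fin.val_last] using this

lemma Zmat_sq : Zmat N * Zmat N = -1 := by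
  simp [Zmat, Matrix.fromBlocks_multiply, ← Matrix.fromBlocks_one, Matrix.fromBlocks_neg]

lemma dual_apply (M : Matrix (Fin N ⊕ Fin N) (Fin N ⊕ Fin N) ℂ) (a b : Fin N ⊕ Fin N) :
    dual M a b = Sum.elim (fun p => Sum.elim (fun q => M (Sum.inr q) (Sum.inr p))
        (fun q => -M (Sum.inl q) (Sum.inr p)))
      (fun p => Sum.elim (fun q => -M (Sum.inr q) (Sum.inl p))
        (fun q => M (Sum.inl q) (Sum.inl p))) a b := by
  have h : dual M
      = Matrix.fromBlocks (-(0 : Matrix (Fin N) (Fin N) ℂ)) (-(1 : Matrix (Fin N) (Fin N) ℂ))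
          1 0 * Mᵀ * Zmat N := by
    rw [dual, Zmat]; congr 1; congr 1; simp [Matrix.fromBlocks_neg]
  rw [h]
  cases a <;> cases b <;>
    simp [Zmat, Matrix.mul_apply, Fintype.sum_sum_type, Matrix.fromBlocks,
      Matrix.one_apply, ite_mul, mul_ite, Finset.sum_ite_eq, Finset.sum_ite_eq',
      transpose_apply]

lemma qrel_of_dual {M : Matrix (Fin N ⊕ Fin N) (Fin N ⊕ Fin N) ℂ} (h : Mᴴ = dual M) :
    (∀ p q, M (Sum.inr p) (Sum.inr q) = (starRingEnd ℂ) (M (Sum.inl p) (Sum.inl q))) ∧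
    (∀ p q, M (Sum.inl p) (Sum.inr q) = -(starRingEnd ℂ) (M (Sum.inr p) (Sum.inl q))) := by
  constructor
  · intro p q
    have h1 := congrFun (congrFun h (Sum.inl q)) (Sum.inl p)
    rw [dual_apply] at h1
    simp only [Matrix.conjTranspose_apply, Sum.elim_inl] at h1
    rw [← h1]
    rfl
  · intro p q
    have h1 := congrFun (congrFun h (Sum.inl q)) (Sum.inr p)
    rw [dual_apply] at h1
    simp only [Matrix.conjTranspose_apply, Sum.elim_inl, Sum.elim_inr] at h1
    have h2 : M (Sum.inl p) (Sum.inr q) = -star (M (Sum.inr p) (Sum.inl q)) := by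
      rw [h1, neg_neg]
    exact h2

lemma mvE_jmap {M : Matrix (Fin N ⊕ Fin N) (Fin N ⊕ Fin N) ℂ}
    (rel1 : ∀ p q, M (Sum.inr p) (Sum.inr q) = (starRingEnd ℂ) (M (Sum.inl p) (Sum.inl q)))
    (rel2 : ∀ p q, M (Sum.inl p) (Sum.inr q) = -(starRingEnd ℂ) (M (Sum.inr p) (Sum.inl q)))
    (v : QV N) : mvE M (Jmap v) = Jmap (mvE M v) := by
  have r1 : ∀ p q, (starRingEnd ℂ) (M (Sum.inr p) (Sum.inr q)) = M (Sum.inl p) (Sum.inl q) := by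
    intro p q; rw [rel1]; exact Complex.conj_conj _
  have r2 : ∀ p q, (starRingEnd ℂ) (M (Sum.inl p) (Sum.inr q)) = -(M (Sum.inr p) (Sum.inl q)) := by
    intro p q; rw [rel2]; simp
  ext c
  cases c with
  | inl i =>
    rw [jmap_apply_inl, mvE_entry, mvE_entry]
    rw [Fintype.sum_sum_type, Fintype.sum_sum_type, map_add, map_sum, map_sum, neg_add, add_comm]
    congr 1
    · rw [← Finset.sum_neg_distrib]
      apply Finset.sum_congr rfl
      intro p _
      rw [jmap_apply_inr, rel2, _root_.map_mul]
      ring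
    · rw [← Finset.sum_neg_distrib]
      apply Finset.sum_congr rfl
      intro p _
      rw [jmap_apply_inl, _root_.map_mul, r1]
      ring
  | inr i =>
    rw [jmap_apply_inr, mvE_entry, mvE_entry]
    rw [Fintype.sum_sum_type, Fintype.sum_sum_type, map_add, map_sum, map_sum, add_comm]
    congr 1
    · apply Finset.sum_congr rfl
      intro p _
      rw [jmap_apply_inr, rel1, _root_.map_mul]
    · apply Finset.sum_congr rfl
      intro p _
      rw [jmap_apply_inl, _root_.map_mul, r2]
      ring

theorem quaternionic_schur {N k : ℕ} (X : Fin k → Matrix (Fin N ⊕ Fin N) (Fin N ⊕ Fin N) ℂ)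
    (hcomm : ∀ i j, Commute (X i) (X j)) (hq : ∀ j, (X j)ᴴ = dual (X j)) :
    ∃ U : Matrix (Fin N ⊕ Fin N) (Fin N ⊕ Fin N) ℂ,
      U ∈ Matrix.unitaryGroup (Fin N ⊕ Fin N) ℂ ∧
      Uᵀ * Zmat N * U = Zmat N ∧
      ∀ j, ∃ T S : Matrix (Fin N) (Fin N) ℂ,
        (∀ p q : Fin N, q < p → T p q = 0) ∧
        (∀ p q : Fin N, q ≤ p → S p q = 0) ∧
        Uᴴ * X j * U =
          Matrix.fromBlocks T S (-(S.map (starRingEnd ℂ))) (T.map (starRingEnd ℂ)) := by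
  have hcm : ∀ i j, X i * X j = X j * X i := fun i j => hcomm i j
  have hrel : ∀ j (v : QV N), mvE (X j) (Jmap v) = Jmap (mvE (X j) v) := fun j v =>
    mvE_jmap (qrel_of_dual (hq j)).1 (qrel_of_dual (hq j)).2 v
  obtain ⟨e, hA, hB, hC⟩ := build X hcm hrel N le_rfl
  set g : Fin N ⊕ Fin N → QV N := Sum.elim e (fun i => Jmap (e i)) with hgdef
  -- full orthonormality
  have hg : ∀ a b, ⟪g a, g b⟫_ℂ = if a = b then 1 else 0 := by
    rintro (i | i) (j | j)
    · simpa [hgdef] using hA i j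
    · simpa [hgdef] using hB i j
    · have h2 : ⟪Jmap (e i), e j⟫_ℂ = 0 := by
        rw [← inner_conj_symm, hB j i, map_zero]
      simpa [hgdef] using h2
    · have := inner_jmap_jmap (e i) (e j)
      rw [hA i j] at this
      simpa [hgdef, apply_ite (starRingEnd ℂ)] using this
  set U : Matrix (Fin N ⊕ Fin N) (Fin N ⊕ Fin N) ℂ := Matrix.of fun a b => g b a with hUdef
  have hU1 : Uᴴ * U = 1 := by
    ext a b
    have h1 : (Uᴴ * U) a b = ⟪g a, g b⟫_ℂ := by
      rw [Matrix.mul_apply, PiLp.inner_apply]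
      apply Finset.sum_congr rfl
      intro c _
      rw [RCLike.inner_apply, conjTranspose_apply]
      simp [hUdef]
      ring
    rw [h1, hg, Matrix.one_apply]
  have hUmem : U ∈ Matrix.unitaryGroup (Fin N ⊕ Fin N) ℂ := by
    rw [Matrix.mem_unitaryGroup_iff']
    rw [Matrix.star_eq_conjTranspose]
    exact hU1
  -- quaternionic structure of U
  have hUrel1 : ∀ p q, U (Sum.inr p) (Sum.inr q) = (starRingEnd ℂ) (U (Sum.inl p) (Sum.inl q)) := by
    intro p q; simp [hUdef, hgdef, jmap_apply_inr]
  have hUrel2 : ∀ p q, U (Sum.inl p) (Sum.inr q) = -(starRingEnd ℂ) (U (Sum.inr p) (Sum.inl q)) := by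
    intro p q; simp [hUdef, hgdef, jmap_apply_inl]
  have hUdual : Uᴴ = dual U := by
    ext a b
    rw [dual_apply]
    cases a <;> cases b <;> simp only [conjTranspose_apply, Sum.elim_inl, Sum.elim_inr]
    · rw [hUrel1]; rfl
    · rw [hUrel2, neg_neg]; rfl
    · rw [hUrel2]; simp
    · rw [hUrel1]; simp
  have hsymp : Uᵀ * Zmat N * U = Zmat N := by
    have h2 : Zmat N * Uᴴ * Zmat N = -Uᵀ := by
      rw [hUdual, dual]
      have h3 : Zmat N * (-(Zmat N) * Uᵀ * Zmat N) * Zmat N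
          = -((Zmat N * Zmat N) * Uᵀ * (Zmat N * Zmat N)) := by noncomm_ring
      rw [h3, Zmat_sq]
      simp
    have h4 : Uᵀ = -(Zmat N * Uᴴ * Zmat N) := by rw [h2, neg_neg]
    calc Uᵀ * Zmat N * U = -(Zmat N * Uᴴ * Zmat N) * Zmat N * U := by rw [← h4]
      _ = -(Zmat N * Uᴴ * (Zmat N * Zmat N) * U) := by noncomm_ring
      _ = Zmat N * (Uᴴ * U) := by rw [Zmat_sq]; noncomm_ring
      _ = Zmat N := by rw [hU1, mul_one]
  refine ⟨U, hUmem, hsymp, ?_⟩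
  intro j
  refine ⟨Matrix.of fun p q => ⟪e p, mvE (X j) (e q)⟫_ℂ,
    Matrix.of fun p q => ⟪e p, mvE (X j) (Jmap (e q))⟫_ℂ, ?_, ?_, ?_⟩
  · -- T is upper triangular
    intro p q hpq
    obtain ⟨μ, hμ⟩ := hC j q
    have h5 : mvE (X j) (e q) = μ • e q + (mvE (X j) (e q) - μ • e q) := by abel
    simp only [Matrix.of_apply]
    rw [h5, inner_add_right, inner_smul_right, hA p q]
    rw [if_neg (ne_of_gt hpq)]
    rw [inner_span_zero ?_ _ hμ]
    · ring
    · rintro x ⟨i, hi, rfl | rfl⟩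
      · rw [hA p i, if_neg]
        intro h'
        rw [← h'] at hi
        have hpq' : q.val < p.val := hpq
        omega
      · exact hB p i
  · -- S is strictly upper triangular
    intro p q hpq
    obtain ⟨μ, hμ⟩ := hC j q
    have h5 : mvE (X j) (e q) = μ • e q + (mvE (X j) (e q) - μ • e q) := by abel
    simp only [Matrix.of_apply]
    rw [hrel, h5, jmap_add, jmap_smul, inner_add_right, inner_smul_right, hB p q]
    have h6 : Jmap (mvE (X j) (e q) - μ • e q) ∈ Wspan e q.val :=
      jmap_mem_wspan e q.val _ hμ
    rw [inner_span_zero ?_ _ h6]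
    · ring
    · rintro x ⟨i, hi, rfl | rfl⟩
      · rw [hA p i, if_neg]
        intro h'
        rw [← h'] at hi
        have hpq' : q.val ≤ p.val := hpq
        omega
      · exact hB p i
  · -- block structure
    have hAval : ∀ a b, (Uᴴ * X j * U) a b = ⟪g a, mvE (X j) (g b)⟫_ℂ := by
      intro a b
      rw [Matrix.mul_assoc, Matrix.mul_apply, PiLp.inner_apply]
      apply Finset.sum_congr rfl
      intro c _
      rw [RCLike.inner_apply, conjTranspose_apply, Matrix.mul_apply, mvE_entry]
      simp [hUdef]
      ring
    ext a b
    rcases a with p | p <;> rcases b with q | q <;> rw [hAval]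
    · simp [hgdef]
    · simp [hgdef]
    · -- lower-left block
      have h6 : mvE (X j) (e q) = -(Jmap (mvE (X j) (Jmap (e q)))) := by
        rw [hrel, jmap_jmap, neg_neg]
      have h7 : ⟪g (Sum.inr p), mvE (X j) (g (Sum.inl q))⟫_ℂ
          = -(starRingEnd ℂ) ⟪e p, mvE (X j) (Jmap (e q))⟫_ℂ := by
        show ⟪Jmap (e p), mvE (X j) (e q)⟫_ℂ = _
        rw [h6, inner_neg_right, inner_jmap_jmap]
      rw [h7]
      simp
    · -- lower-right block
      have h7 : ⟪g (Sum.inr p), mvE (X j) (g (Sum.inr q))⟫_ℂ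
          = (starRingEnd ℂ) ⟪e p, mvE (X j) (e q)⟫_ℂ := by
        show ⟪Jmap (e p), mvE (X j) (Jmap (e q))⟫_ℂ = _
        rw [hrel, inner_jmap_jmap]
      rw [h7]
      simp
end

section
/- If X₁, ..., X_k are pairwise commuting normal 2N×2N complex matrices, each satisfying X_j* = X_j^♯, then there exists a single symplectic unitary U such that for all j, U* X_j U = [[D_j, 0], [0, conj(D_j)]] with each D_j diagonal. -/
open Matrix

namespace QS

open scoped InnerProductSpace

variable {N : ℕ}

abbrev V (N : ℕ) := EuclideanSpace ℂ (Fin N ⊕ Fin N)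

noncomputable def mv (X : Matrix (Fin N ⊕ Fin N) (Fin N ⊕ Fin N) ℂ) (v : V N) : V N := WithLp.toLp 2 (X *ᵥ v)

noncomputable def tm (v : V N) : V N := WithLp.toLp 2 (Tmap v)

lemma mv_apply (X : Matrix (Fin N ⊕ Fin N) (Fin N ⊕ Fin N) ℂ) (v : V N) (a) :
    mv X v a = ∑ c, X a c * v c := rfl

lemma mv_smul (X : Matrix (Fin N ⊕ Fin N) (Fin N ⊕ Fin N) ℂ) (c : ℂ) (v : V N) :
    mv X (c • v) = c • mv X v := by
  simpa [mv] using congrArg (WithLp.toLp 2) (X.mulVec_smul c v)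

lemma mv_mv (X Y : Matrix (Fin N ⊕ Fin N) (Fin N ⊕ Fin N) ℂ) (v : V N) :
    mv X (mv Y v) = mv (X * Y) v := by
  simp [mv]

lemma inner_apply (x y : V N) : ⟪x, y⟫_ℂ = ∑ a, (starRingEnd ℂ) (x a) * y a := by
  simp [PiLp.inner_apply, RCLike.inner_apply, mul_comm]

lemma inner_symm_zero {x y : V N} (h : ⟪x, y⟫_ℂ = 0) : ⟪y, x⟫_ℂ = 0 := by
  rw [← inner_conj_symm, h, map_zero]

lemma inner_mv (X : Matrix (Fin N ⊕ Fin N) (Fin N ⊕ Fin N) ℂ) (x y : V N) :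
    ⟪mv Xᴴ x, y⟫_ℂ = ⟪x, mv X y⟫_ℂ := by
  simp only [inner_apply, mv_apply, conjTranspose_apply, map_sum, _root_.map_mul,
    RCLike.star_def, Complex.conj_conj, Finset.sum_mul, Finset.mul_sum]
  rw [Finset.sum_comm]
  exact Finset.sum_congr rfl fun a _ => Finset.sum_congr rfl fun b _ => by ring

lemma tm_smul (c : ℂ) (v : V N) : tm (c • v) = (starRingEnd ℂ) c • tm v := by
  ext a
  cases a <;> simp [tm, Tmap, PiLp.smul_apply, smul_eq_mul, mul_comm]

lemma tm_tm (v : V N) : tm (tm v) = -v := by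
  ext a
  cases a <;> simp [tm, Tmap]

lemma inner_tm_tm (x y : V N) : ⟪tm x, tm y⟫_ℂ = (starRingEnd ℂ) ⟪x, y⟫_ℂ := by
  simp only [inner_apply, map_sum, _root_.map_mul, tm, Tmap]
  rw [Fintype.sum_sum_type, Fintype.sum_sum_type]
  simp [Complex.conj_conj, mul_comm]
  rw [add_comm]

lemma inner_tm_self (v : V N) : ⟪v, tm v⟫_ℂ = 0 := by
  simp only [inner_apply, tm, Tmap]
  rw [Fintype.sum_sum_type]
  simp [mul_comm]

lemma mv_tm {X : Matrix (Fin N ⊕ Fin N) (Fin N ⊕ Fin N) ℂ} (hq : Xᴴ = dual X) (v : V N) :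
    mv X (tm v) = tm (mv X v) := by
  have h1 : ∀ a b, X (Sum.inr a) (Sum.inr b) = (starRingEnd ℂ) (X (Sum.inl a) (Sum.inl b)) := by
    intro a b
    have h := congrFun (congrFun hq (Sum.inl b)) (Sum.inl a)
    simp [dual, Zmat, mul_apply, Fintype.sum_sum_type, one_apply, conjTranspose_apply] at h
    exact h.symm
  have h2 : ∀ a b, X (Sum.inr a) (Sum.inl b) = -(starRingEnd ℂ) (X (Sum.inl a) (Sum.inr b)) := by
    intro a b
    have h := congrFun (congrFun hq (Sum.inr b)) (Sum.inl a)
    simp [dual, Zmat, mul_apply, Fintype.sum_sum_type, one_apply, conjTranspose_apply] at h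
    have := congrArg Neg.neg h
    simpa using this.symm
  ext a
  cases a <;>
  · simp only [mv, tm, mulVec, dotProduct, Tmap, Sum.elim_inl, Sum.elim_inr,
      Fintype.sum_sum_type, h1, h2, map_sum, _root_.map_mul, map_neg, map_add,
      Complex.conj_conj, neg_mul, mul_neg, neg_neg, Finset.sum_neg_distrib, neg_add_rev]
    try ring

lemma adj_eig {X : Matrix (Fin N ⊕ Fin N) (Fin N ⊕ Fin N) ℂ}
    (hn : X * Xᴴ = Xᴴ * X) {v : V N} {μ : ℂ} (h : mv X v = μ • v) :
    mv Xᴴ v = (starRingEnd ℂ) μ • v := by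
  have e1 : ⟪mv Xᴴ v, v⟫_ℂ = μ * ⟪v, v⟫_ℂ := by rw [inner_mv, h, inner_smul_right]
  have e2 : ⟪v, mv Xᴴ v⟫_ℂ = (starRingEnd ℂ) μ * ⟪v, v⟫_ℂ := by
    rw [← inner_conj_symm, e1, _root_.map_mul, inner_conj_symm]
  have e3 : ⟪mv Xᴴ v, mv Xᴴ v⟫_ℂ = μ * ((starRingEnd ℂ) μ * ⟪v, v⟫_ℂ) := by
    rw [inner_mv, mv_mv, hn, ← mv_mv, h, mv_smul, inner_smul_right, e2]
  have key : mv Xᴴ v - (starRingEnd ℂ) μ • v = 0 := by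
    rw [← inner_self_eq_zero (𝕜 := ℂ), inner_sub_sub_self]
    simp only [inner_smul_left, inner_smul_right, e1, e2, e3, Complex.conj_conj]
    ring
  exact sub_eq_zero.mp key

noncomputable def mvL (X : Matrix (Fin N ⊕ Fin N) (Fin N ⊕ Fin N) ℂ) : V N →ₗ[ℂ] V N where
  toFun := mv X
  map_add' x y := by simpa [mv] using congrArg (WithLp.toLp 2) (X.mulVec_add x y)
  map_smul' c x := by simpa [mv] using congrArg (WithLp.toLp 2) (X.mulVec_smul c x)

lemma exists_joint_eig : ∀ (k : ℕ) (X : Fin k → Matrix (Fin N ⊕ Fin N) (Fin N ⊕ Fin N) ℂ),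
    (∀ i j, Commute (X i) (X j)) → ∀ W : Submodule ℂ (V N), W ≠ ⊥ →
    (∀ j, ∀ v ∈ W, mv (X j) v ∈ W) →
    ∃ v ∈ W, v ≠ 0 ∧ ∀ j, ∃ μ : ℂ, mv (X j) v = μ • v := by
  intro k
  induction k with
  | zero =>
    intro X _ W hW _
    obtain ⟨v, hv, hv0⟩ := Submodule.exists_mem_ne_zero_of_ne_bot hW
    exact ⟨v, hv, hv0, fun j => j.elim0⟩
  | succ k IH =>
    intro X hcomm W hW hinv
    haveI : Nontrivial W := Submodule.nontrivial_iff_ne_bot.mpr hW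
    set f : Module.End ℂ W := (mvL (X 0)).restrict (fun x hx => hinv 0 x hx) with hf
    obtain ⟨μ, hμ⟩ := Module.End.exists_eigenvalue f
    obtain ⟨w, hw⟩ := hμ.exists_hasEigenvector
    have hw1 : mv (X 0) (w : V N) = μ • (w : V N) := by
      have := hw.apply_eq_smul
      have h2 := congrArg (Subtype.val) this
      simpa [hf, LinearMap.restrict_apply, mvL] using h2
    set E : Submodule ℂ (V N) := W ⊓ Module.End.eigenspace (mvL (X 0)) μ with hE
    have hmemE : ∀ x : V N, x ∈ E ↔ x ∈ W ∧ mv (X 0) x = μ • x := by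
      intro x
      simp [hE, Submodule.mem_inf, Module.End.mem_eigenspace_iff, mvL]
    have hEne : E ≠ ⊥ := by
      rw [Submodule.ne_bot_iff]
      exact ⟨(w : V N), (hmemE _).mpr ⟨w.2, hw1⟩, by simpa using hw.2⟩
    have hEinv : ∀ j, ∀ v ∈ E, mv (X j) v ∈ E := by
      intro j v hv
      rw [hmemE] at hv ⊢
      refine ⟨hinv j v hv.1, ?_⟩
      rw [mv_mv, (hcomm 0 j).eq, ← mv_mv, hv.2, mv_smul]
    obtain ⟨v, hvE, hv0, hvall⟩ :=
      IH (fun i => X i.succ) (fun i j => hcomm i.succ j.succ) E hEne (fun j => hEinv j.succ)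
    refine ⟨v, ((hmemE v).mp hvE).1, hv0, fun j => ?_⟩
    refine Fin.cases ?_ (fun i => hvall i) j
    exact ⟨μ, ((hmemE v).mp hvE).2⟩

lemma main_ind {k : ℕ} (X : Fin k → Matrix (Fin N ⊕ Fin N) (Fin N ⊕ Fin N) ℂ)
    (hcomm : ∀ i j, Commute (X i) (X j)) (hq : ∀ j, (X j)ᴴ = dual (X j))
    (hnormal : ∀ j, X j * (X j)ᴴ = (X j)ᴴ * X j) :
    ∀ (n : ℕ) (W : Submodule ℂ (V N)), Module.finrank ℂ W = 2 * n →
    (∀ j, ∀ v ∈ W, mv (X j) v ∈ W) → (∀ v ∈ W, tm v ∈ W) →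
    ∃ e : Fin n → V N, (∀ i, e i ∈ W) ∧
      (∀ i i', ⟪e i, e i'⟫_ℂ = if i = i' then 1 else 0) ∧
      (∀ i i', ⟪e i, tm (e i')⟫_ℂ = 0) ∧
      (∀ j i, ∃ μ : ℂ, mv (X j) (e i) = μ • e i) := by
  intro n
  induction n with
  | zero =>
    intro W _ _ _
    exact ⟨fun i => i.elim0, fun i => i.elim0, fun i => i.elim0, fun i => i.elim0,
      fun j i => i.elim0⟩
  | succ n IH =>
    intro W hrank hinv hTinv
    have hWne : W ≠ ⊥ := by
      intro h
      rw [h] at hrank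
      simp [finrank_bot] at hrank
    obtain ⟨v, hvW, hv0, hveig⟩ := exists_joint_eig k X hcomm W hWne hinv
    have hnorm : ‖v‖ ≠ 0 := by simpa using hv0
    have hvC : ((‖v‖ : ℝ) : ℂ) ≠ 0 := Complex.ofReal_ne_zero.mpr hnorm
    set c : ℂ := ((‖v‖ : ℝ) : ℂ)⁻¹ with hc
    set u : V N := c • v with hu
    have huW : u ∈ W := W.smul_mem c hvW
    have huu : ⟪u, u⟫_ℂ = 1 := by
      rw [hu, inner_smul_left, inner_smul_right, inner_self_eq_norm_sq_to_K, hc]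
      rw [map_inv₀, Complex.conj_ofReal]
      field_simp
      rfl
    have hueig : ∀ j, ∃ μ : ℂ, mv (X j) u = μ • u := by
      intro j
      obtain ⟨μ, hμ⟩ := hveig j
      exact ⟨μ, by rw [hu, mv_smul, hμ, smul_comm]⟩
    have huTu : ⟪u, tm u⟫_ℂ = 0 := inner_tm_self u
    have hTuu : ⟪tm u, u⟫_ℂ = 0 := by
      rw [← inner_conj_symm, huTu, map_zero]
    have hTuTu : ⟪tm u, tm u⟫_ℂ = 1 := by
      rw [inner_tm_tm, huu]
      simp
    set g : Fin 2 → V N := ![u, tm u] with hg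
    have hgon : Orthonormal ℂ g := by
      rw [orthonormal_iff_ite]
      intro i j
      fin_cases i <;> fin_cases j <;>
        simp [hg, huu, huTu, hTuu, hTuTu, -inner_self_eq_norm_sq_to_K]
    set K := Submodule.span ℂ (Set.range g) with hK
    have huK : u ∈ K := Submodule.subset_span ⟨0, rfl⟩
    have hTuK : tm u ∈ K := Submodule.subset_span ⟨1, rfl⟩
    have hKW : K ≤ W := by
      rw [hK, Submodule.span_le]
      rintro x ⟨i, rfl⟩
      fin_cases i
      · exact huW
      · exact hTinv u huW
    have hfrK : Module.finrank ℂ K = 2 := by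
      rw [hK, finrank_span_eq_card hgon.linearIndependent]
      simp
    set W' := Kᗮ ⊓ W with hW'
    have hfrW' : Module.finrank ℂ W' = 2 * n := by
      refine Submodule.finrank_add_inf_finrank_orthogonal' hKW ?_
      rw [hfrK, hrank]
      omega
    have hW'sub : ∀ x ∈ W', x ∈ W ∧ ⟪u, x⟫_ℂ = 0 ∧ ⟪tm u, x⟫_ℂ = 0 := by
      intro x hx
      obtain ⟨hxK, hxW⟩ := hx
      exact ⟨hxW, (Submodule.mem_orthogonal K x).mp hxK u huK,
        (Submodule.mem_orthogonal K x).mp hxK (tm u) hTuK⟩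
    have hW'mem : ∀ x, x ∈ W → ⟪u, x⟫_ℂ = 0 → ⟪tm u, x⟫_ℂ = 0 → x ∈ W' := by
      intro x hxW h1 h2
      refine Submodule.mem_inf.mpr ⟨(Submodule.mem_orthogonal K x).mpr fun y hy => ?_, hxW⟩
      rw [hK] at hy
      obtain ⟨cf, rfl⟩ := (Submodule.mem_span_range_iff_exists_fun ℂ).mp hy
      rw [sum_inner, Fin.sum_univ_two, inner_smul_left, inner_smul_left,
        show g 0 = u from rfl, show g 1 = tm u from rfl, h1, h2, mul_zero, mul_zero, add_zero]
    have hW'inv : ∀ j, ∀ x ∈ W', mv (X j) x ∈ W' := by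
      intro j x hx
      obtain ⟨hxW, hux, hTux⟩ := hW'sub x hx
      obtain ⟨μ, hμ⟩ := hueig j
      have hXadj : mv (X j)ᴴ u = (starRingEnd ℂ) μ • u := adj_eig (hnormal j) hμ
      have hTu : mv (X j) (tm u) = (starRingEnd ℂ) μ • tm u := by
        rw [mv_tm (hq j), hμ, tm_smul]
      have hTuadj : mv (X j)ᴴ (tm u) = μ • tm u := by
        have := adj_eig (hnormal j) hTu
        rwa [Complex.conj_conj] at this
      refine hW'mem _ (hinv j x hxW) ?_ ?_
      · rw [← inner_mv, hXadj, inner_smul_left, hux, mul_zero]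
      · rw [← inner_mv, hTuadj, inner_smul_left, hTux, mul_zero]
    have hW'T : ∀ x ∈ W', tm x ∈ W' := by
      intro x hx
      obtain ⟨hxW, hux, hTux⟩ := hW'sub x hx
      refine hW'mem _ (hTinv x hxW) ?_ ?_
      · have h := inner_tm_tm u (tm x)
        rw [tm_tm, inner_neg_right, hTux, neg_zero, starRingEnd_apply] at h
        exact star_eq_zero.mp h.symm
      · rw [inner_tm_tm, hux, map_zero]
    obtain ⟨e', he'W, he'on, he'T, he'eig⟩ := IH W' hfrW' hW'inv hW'T
    have he'W2 : ∀ i, e' i ∈ W := fun i => (hW'sub _ (he'W i)).1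
    have hue' : ∀ i, ⟪u, e' i⟫_ℂ = 0 := fun i => (hW'sub _ (he'W i)).2.1
    have hTue' : ∀ i, ⟪tm u, e' i⟫_ℂ = 0 := fun i => (hW'sub _ (he'W i)).2.2
    have huTe' : ∀ i, ⟪u, tm (e' i)⟫_ℂ = 0 := fun i => (hW'sub _ (hW'T _ (he'W i))).2.1
    refine ⟨Fin.cons u e', ?_, ?_, ?_, ?_⟩
    · intro i
      refine Fin.cases ?_ ?_ i
      · simpa using huW
      · intro i'
        simpa using he'W2 i'
    · intro i i'
      refine Fin.cases ?_ (fun a => ?_) i <;> refine Fin.cases ?_ (fun b => ?_) i'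
      · simpa using huu
      · simpa [(Fin.succ_ne_zero _).symm] using hue' b
      · simpa [Fin.succ_ne_zero] using inner_symm_zero (hue' a)
      · simpa [Fin.succ_inj] using he'on a b
    · intro i i'
      refine Fin.cases ?_ (fun a => ?_) i <;> refine Fin.cases ?_ (fun b => ?_) i'
      · simpa using huTu
      · simpa using huTe' b
      · simpa using inner_symm_zero (hTue' a)
      · simpa using he'T a b
    · intro j i
      refine Fin.cases ?_ (fun a => ?_) i
      · simpa using hueig j
      · simpa using he'eig j a

end QS

open scoped InnerProductSpace in
open QS in
theorem quaternionic_spectral {N k : ℕ} (X : Fin k → Matrix (Fin N ⊕ Fin N) (Fin N ⊕ Fin N) ℂ)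
    (hcomm : ∀ i j, Commute (X i) (X j)) (hq : ∀ j, (X j)ᴴ = dual (X j))
    (hnormal : ∀ j, X j * (X j)ᴴ = (X j)ᴴ * X j) :
    ∃ U : Matrix (Fin N ⊕ Fin N) (Fin N ⊕ Fin N) ℂ,
      U ∈ Matrix.unitaryGroup (Fin N ⊕ Fin N) ℂ ∧
      Uᵀ * Zmat N * U = Zmat N ∧
      ∀ j, ∃ D : Matrix (Fin N) (Fin N) ℂ, D.IsDiag ∧
        Uᴴ * X j * U = Matrix.fromBlocks D 0 0 (D.map (starRingEnd ℂ)) := by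
  classical
  have htop : Module.finrank ℂ (⊤ : Submodule ℂ (QS.V N)) = 2 * N := by
    rw [finrank_top, finrank_euclideanSpace]
    simp [Fintype.card_sum]
    omega
  obtain ⟨e, heW, hon, hTo, heig⟩ := QS.main_ind X hcomm hq hnormal N ⊤ htop
    (fun j v _ => Submodule.mem_top) (fun v _ => Submodule.mem_top)
  choose d hd using heig
  set col : Fin N ⊕ Fin N → QS.V N := Sum.elim e (fun i => QS.tm (e i)) with hcol
  have hcolon : ∀ a b, ⟪col a, col b⟫_ℂ = if a = b then 1 else 0 := by
    rintro (i|i) (i'|i')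
    · rw [show col (Sum.inl i) = e i from rfl, show col (Sum.inl i') = e i' from rfl, hon i i']
      by_cases h : i = i' <;> simp [h]
    · rw [show col (Sum.inl i) = e i from rfl, show col (Sum.inr i') = QS.tm (e i') from rfl,
        hTo i i']
      simp
    · rw [show col (Sum.inr i) = QS.tm (e i) from rfl, show col (Sum.inl i') = e i' from rfl,
        QS.inner_symm_zero (hTo i' i)]
      simp
    · rw [show col (Sum.inr i) = QS.tm (e i) from rfl, show col (Sum.inr i') = QS.tm (e i') from rfl,
        QS.inner_tm_tm, hon i i']
      by_cases h : i = i' <;> simp [h]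
  set U : Matrix (Fin N ⊕ Fin N) (Fin N ⊕ Fin N) ℂ := Matrix.of (fun a b => col b a) with hU
  have hsum : ∀ a b, ∑ c, (starRingEnd ℂ) (col a c) * col b c = if a = b then 1 else 0 := by
    intro a b
    rw [← QS.inner_apply]
    exact hcolon a b
  have hUH : ∀ a c, Uᴴ a c = (starRingEnd ℂ) (col a c) := by
    intro a c
    simp [hU, conjTranspose_apply, RCLike.star_def]
  have hUU : Uᴴ * U = 1 := by
    ext a b
    rw [Matrix.mul_apply]
    simp only [hUH]
    simp only [hU, Matrix.of_apply]
    rw [hsum]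
    simp [Matrix.one_apply]
  set μfun : Fin k → Fin N ⊕ Fin N → ℂ :=
    fun j => Sum.elim (d j) (fun i => (starRingEnd ℂ) (d j i)) with hμfun
  have heigcol : ∀ j b, QS.mv (X j) (col b) = μfun j b • col b := by
    rintro j (i|i)
    · simpa [hcol, hμfun] using hd j i
    · simp only [hcol, hμfun, Sum.elim_inr]
      rw [QS.mv_tm (hq j), hd j i, QS.tm_smul]
  have hXU : ∀ j b c, (X j * U) c b = QS.mv (X j) (col b) c := by
    intro j b c
    simp [hU, Matrix.mul_apply, QS.mv_apply]
  have hdiag : ∀ j, Uᴴ * X j * U =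
      Matrix.fromBlocks (Matrix.diagonal (d j)) 0 0
        ((Matrix.diagonal (d j)).map (starRingEnd ℂ)) := by
    intro j
    rw [Matrix.mul_assoc]
    ext a b
    rw [Matrix.mul_apply]
    have h1 : ∀ c, (X j * U) c b = μfun j b * col b c := by
      intro c
      rw [hXU j b c, heigcol j b]
      simp [PiLp.smul_apply, smul_eq_mul]
    have h2 : ∑ c, Uᴴ a c * (X j * U) c b = μfun j b * ∑ c, (starRingEnd ℂ) (col a c) * col b c := by
      rw [Finset.mul_sum]
      exact Finset.sum_congr rfl fun c _ => by rw [hUH, h1]; ring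
    rw [h2, hsum]
    rcases a with i|i <;> rcases b with i'|i' <;>
      by_cases h : i = i' <;>
        simp [hμfun, Matrix.diagonal_apply, Matrix.map_apply, h, Sum.inl.injEq, Sum.inr.injEq]
  have hkey : ∀ x y : QS.V N,
      (∑ i, x (Sum.inl i) * y (Sum.inr i)) + ∑ i, x (Sum.inr i) * -(y (Sum.inl i)) =
        ⟪QS.tm x, y⟫_ℂ := by
    intro x y
    rw [QS.inner_apply, Fintype.sum_sum_type]
    simp only [QS.tm, Tmap, Sum.elim_inl, Sum.elim_inr, map_neg, Complex.conj_conj,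
      neg_mul, mul_neg]
    rw [add_comm]
  have hZU : ∀ b c, (Zmat N * U) c b = QS.mv (Zmat N) (col b) c := by
    intro b c
    simp [hU, Matrix.mul_apply, QS.mv_apply]
  have hZl : ∀ (w : QS.V N) i, QS.mv (Zmat N) w (Sum.inl i) = w (Sum.inr i) := by
    intro w i
    simp [QS.mv_apply, Zmat, Fintype.sum_sum_type, Matrix.one_apply]
  have hZr : ∀ (w : QS.V N) i, QS.mv (Zmat N) w (Sum.inr i) = -w (Sum.inl i) := by
    intro w i
    simp [QS.mv_apply, Zmat, Fintype.sum_sum_type, Matrix.one_apply]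
  have hsymp : Uᵀ * Zmat N * U = Zmat N := by
    rw [Matrix.mul_assoc]
    ext a b
    rw [Matrix.mul_apply]
    have h3 : ∑ c, Uᵀ a c * (Zmat N * U) c b = ∑ c, col a c * QS.mv (Zmat N) (col b) c := by
      refine Finset.sum_congr rfl fun c _ => ?_
      rw [hZU]
      simp [hU]
    rw [h3, Fintype.sum_sum_type]
    simp only [hZl, hZr]
    rw [hkey (col a) (col b)]
    rcases a with i|i <;> rcases b with i'|i'
    · have ht : QS.tm (col (Sum.inl i)) = col (Sum.inr i) := rfl
      rw [ht, hcolon]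
      simp [Zmat]
    · have ht : QS.tm (col (Sum.inl i)) = col (Sum.inr i) := rfl
      rw [ht, hcolon]
      by_cases h : i = i' <;> simp [Zmat, h, Matrix.one_apply]
    · have ht : QS.tm (col (Sum.inr i)) = -(col (Sum.inl i)) := QS.tm_tm (e i)
      rw [ht, inner_neg_left, hcolon]
      by_cases h : i = i' <;> simp [Zmat, h, Matrix.one_apply]
    · have ht : QS.tm (col (Sum.inr i)) = -(col (Sum.inl i)) := QS.tm_tm (e i)
      rw [ht, inner_neg_left, hcolon]
      simp [Zmat]
  refine ⟨U, ?_, hsymp, fun j => ⟨Matrix.diagonal (d j), Matrix.isDiag_diagonal _, hdiag j⟩⟩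
  rw [Matrix.mem_unitaryGroup_iff']
  rwa [Matrix.star_eq_conjTranspose]
end

section
/- Every Hermitian self-dual 2N×2N complex matrix X has the form X = U · [[D, 0], [0, D]] · U* for some symplectic unitary U and real diagonal N×N matrix D; in particular every eigenvalue of X has even multiplicity (Kramers degeneracy). -/
open Matrix

namespace KAux
open scoped InnerProductSpace ComplexConjugate
variable {N : ℕ}
abbrev E (N : ℕ) := EuclideanSpace ℂ (Fin N ⊕ Fin N)
noncomputable def T (x : E N) : E N := WithLp.toLp 2 (Tmap x)
noncomputable def ap (X : Matrix (Fin N ⊕ Fin N) (Fin N ⊕ Fin N) ℂ) (x : E N) : E N := WithLp.toLp 2 (X *ᵥ x)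

lemma T_apply_inl (x : E N) (i : Fin N) : T x (Sum.inl i) = -conj (x (Sum.inr i)) := rfl
lemma T_apply_inr (x : E N) (i : Fin N) : T x (Sum.inr i) = conj (x (Sum.inl i)) := rfl
lemma ap_apply (X : Matrix (Fin N ⊕ Fin N) (Fin N ⊕ Fin N) ℂ) (x : E N) (k) :
    ap X x k = ∑ j, X k j * x j := rfl

lemma T_T (x : E N) : T (T x) = -x := by
  ext k; cases k <;> simp [T, Tmap]

lemma T_add (x y : E N) : T (x + y) = T x + T y := by
  ext k; cases k <;> simp [T, Tmap] <;> ring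

lemma T_smul (a : ℂ) (x : E N) : T (a • x) = conj a • T x := by
  ext k; cases k <;> simp [T, Tmap] <;> ring

lemma T_zero : T (0 : E N) = 0 := by
  ext k; cases k <;> simp [T, Tmap]

lemma inner_T_T (x y : E N) : ⟪T x, T y⟫_ℂ = ⟪y, x⟫_ℂ := by
  simp only [PiLp.inner_apply, RCLike.inner_apply]
  rw [Fintype.sum_sum_type, Fintype.sum_sum_type]
  simp only [T, Tmap, Sum.elim_inl, Sum.elim_inr, map_neg, RingHomCompTriple.comp_apply,
    RingHom.id_apply, starRingEnd_self_apply]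
  ring_nf
  rw [add_comm]
  congr 1 <;> exact Finset.sum_congr rfl (fun i _ => by ring)

lemma inner_self_T (x : E N) : ⟪x, T x⟫_ℂ = 0 := by
  simp only [PiLp.inner_apply, RCLike.inner_apply]
  rw [Fintype.sum_sum_type]
  simp [T, Tmap, mul_comm]



lemma Zmat_sq : Zmat N * Zmat N = -1 := by
  simp [Zmat, Matrix.fromBlocks_multiply, ← Matrix.fromBlocks_one, Matrix.fromBlocks_neg]

lemma hcomm (X : Matrix (Fin N ⊕ Fin N) (Fin N ⊕ Fin N) ℂ) (hherm : Xᴴ = X) (hsd : dual X = X) :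
    Zmat N * X.map (starRingEnd ℂ) = X * Zmat N := by
  have h1 : Xᵀ = X.map (starRingEnd ℂ) := by
    ext i j
    have h := congrFun (congrFun hherm i) j
    simp only [Matrix.conjTranspose_apply] at h
    simp only [Matrix.transpose_apply, Matrix.map_apply, ← h, RCLike.star_def,
      starRingEnd_self_apply]
  have h2 : -(Zmat N) * Xᵀ * (Zmat N) = X := hsd
  calc Zmat N * X.map (starRingEnd ℂ) = Zmat N * Xᵀ := by rw [h1]
    _ = -(Zmat N) * Xᵀ * -1 := by rw [Matrix.mul_neg, Matrix.mul_one, Matrix.neg_mul, neg_neg]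
    _ = -(Zmat N) * Xᵀ * (Zmat N * Zmat N) := by rw [Zmat_sq]
    _ = -(Zmat N) * Xᵀ * Zmat N * Zmat N := by rw [Matrix.mul_assoc (-(Zmat N) * Xᵀ)]
    _ = X * Zmat N := by rw [h2]

lemma T_eq_mul (x : E N) : T x = (-(Zmat N)) *ᵥ (star (x : Fin N ⊕ Fin N → ℂ)) := by
  funext k
  cases k <;> simp [T, Tmap, Zmat, Matrix.mulVec, dotProduct, Fintype.sum_sum_type,
    Matrix.fromBlocks, Matrix.one_apply, Finset.sum_ite_eq, Pi.star_apply]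

lemma ap_T (X : Matrix (Fin N ⊕ Fin N) (Fin N ⊕ Fin N) ℂ) (hherm : Xᴴ = X) (hsd : dual X = X)
    (x : E N) : ap X (T x) = T (ap X x) := by
  have hmapstar : X.map (starRingEnd ℂ) *ᵥ star (x : Fin N ⊕ Fin N → ℂ)
      = star ((X *ᵥ x : Fin N ⊕ Fin N → ℂ)) := by
    funext k
    simp [Matrix.mulVec, dotProduct, Matrix.map_apply, Pi.star_apply, map_sum]
  have e : X * -(Zmat N) = -(Zmat N) * X.map (starRingEnd ℂ) := by
    rw [Matrix.mul_neg, ← hcomm X hherm hsd, Matrix.neg_mul]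
  apply WithLp.ofLp_injective
  show X *ᵥ (T x : Fin N ⊕ Fin N → ℂ) = (T (ap X x) : Fin N ⊕ Fin N → ℂ)
  rw [T_eq_mul, Matrix.mulVec_mulVec, e, ← Matrix.mulVec_mulVec, hmapstar]
  exact (T_eq_mul (ap X x)).symm

lemma hsymm (X : Matrix (Fin N ⊕ Fin N) (Fin N ⊕ Fin N) ℂ) (hherm : Xᴴ = X)
    (x y : E N) : ⟪ap X x, y⟫_ℂ = ⟪x, ap X y⟫_ℂ := by
  have key := (Matrix.isHermitian_iff_isSymmetric.mp (hherm : X.IsHermitian)) x y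
  simpa [Matrix.toLpLin_apply, ap] using key

lemma exists_family (X : Matrix (Fin N ⊕ Fin N) (Fin N ⊕ Fin N) ℂ)
    (hherm : Xᴴ = X) (hsd : dual X = X) :
    ∀ k : ℕ, k ≤ N → ∃ (v : Fin k → E N) (d : Fin k → ℝ),
      (∀ i, ap X (v i) = (d i : ℂ) • v i) ∧
      (∀ i j, ⟪v i, v j⟫_ℂ = if i = j then 1 else 0) ∧
      (∀ i j, ⟪v i, T (v j)⟫_ℂ = 0) := by
  intro k
  induction k with
  | zero => exact fun _ => ⟨Fin.elim0, Fin.elim0, fun i => i.elim0, fun i => i.elim0,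
      fun i => i.elim0⟩
  | succ k ih =>
    intro hk
    classical
    obtain ⟨v, d, heig, hortho, hTortho⟩ := ih (Nat.le_of_succ_le hk)
    set S : Submodule ℂ (E N) :=
      Submodule.span ℂ (Set.range (Sum.elim v (fun i => T (v i)))) with hS
    -- members
    have hvS : ∀ i, v i ∈ S := fun i =>
      Submodule.subset_span ⟨Sum.inl i, rfl⟩
    have hTvS : ∀ i, T (v i) ∈ S := fun i =>
      Submodule.subset_span ⟨Sum.inr i, rfl⟩
    -- X-invariance of S
    have hXS : ∀ s ∈ S, ap X s ∈ S := by
      intro s hs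
      induction hs using Submodule.span_induction with
      | mem x hx =>
        obtain ⟨p, rfl⟩ := hx
        cases p with
        | inl i =>
          rw [Sum.elim_inl, heig i]
          exact S.smul_mem _ (hvS i)
        | inr i =>
          rw [Sum.elim_inr, ap_T X hherm hsd, heig i, T_smul]
          exact S.smul_mem _ (hTvS i)
      | zero => simpa [ap, Matrix.mulVec_zero] using S.zero_mem
      | add x y _ _ hx hy =>
        have : ap X (x + y) = ap X x + ap X y := by
          show WithLp.toLp 2 (X *ᵥ (x.ofLp + y.ofLp)) = _
          rw [Matrix.mulVec_add]; rfl
        rw [this]; exact S.add_mem hx hy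
      | smul a x _ hx =>
        have : ap X (a • x) = a • ap X x := by
          show WithLp.toLp 2 (X *ᵥ (a • x.ofLp)) = _
          rw [Matrix.mulVec_smul]; rfl
        rw [this]; exact S.smul_mem a hx
    -- T-invariance of S
    have hTS : ∀ s ∈ S, T s ∈ S := by
      intro s hs
      induction hs using Submodule.span_induction with
      | mem x hx =>
        obtain ⟨p, rfl⟩ := hx
        cases p with
        | inl i => rw [Sum.elim_inl]; exact hTvS i
        | inr i =>
          rw [Sum.elim_inr, T_T]
          exact S.neg_mem (hvS i)
      | zero => rw [T_zero]; exact S.zero_mem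
      | add x y _ _ hx hy => rw [T_add]; exact S.add_mem hx hy
      | smul a x _ hx => rw [T_smul]; exact S.smul_mem _ hx
    -- invariance of the orthogonal complement
    have hXSp : ∀ w ∈ Sᗮ, ap X w ∈ Sᗮ := by
      intro w hw
      rw [Submodule.mem_orthogonal]
      intro u hu
      rw [← hsymm X hherm]
      exact hw _ (hXS u hu)
    have hTSp : ∀ w ∈ Sᗮ, T w ∈ Sᗮ := by
      intro w hw
      rw [Submodule.mem_orthogonal]
      intro u hu
      have h1 : ⟪T w, u⟫_ℂ = 0 := by
        have : u = -T (T u) := by rw [T_T, neg_neg]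
        rw [this, inner_neg_right, inner_T_T, hw _ (hTS u hu), neg_zero]
      rw [← inner_conj_symm, h1, map_zero]
    -- Sᗮ is nontrivial
    have hdim : Module.finrank ℂ S < Module.finrank ℂ (E N) := by
      have h1 : Module.finrank ℂ S ≤ 2 * k := by
        have := finrank_span_le_card (R := ℂ)
          (Set.range (Sum.elim v (fun i => T (v i))))
        refine this.trans ?_
        rw [Set.toFinset_range]
        calc (Finset.univ.image (Sum.elim v fun i => T (v i))).card
            ≤ (Finset.univ : Finset (Fin k ⊕ Fin k)).card := Finset.card_image_le
          _ = 2 * k := by simp [Fintype.card_sum, two_mul]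
      have h2 : Module.finrank ℂ (E N) = 2 * N := by
        simp [finrank_euclideanSpace, Fintype.card_sum, two_mul]
      omega
    have hSne : S ≠ ⊤ := by
      intro h
      rw [h, finrank_top] at hdim
      exact lt_irrefl _ hdim
    have hSpbot : Sᗮ ≠ ⊥ := fun h => hSne (Submodule.orthogonal_eq_bot_iff.mp h)
    haveI : Nontrivial Sᗮ := Submodule.nontrivial_iff_ne_bot.mpr hSpbot
    -- eigenvector in Sᗮ
    let f : E N →ₗ[ℂ] E N :=
      { toFun := fun x => ap X x
        map_add' := fun x y => by
          show WithLp.toLp 2 (X *ᵥ (x.ofLp + y.ofLp)) = _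
          rw [Matrix.mulVec_add]; rfl
        map_smul' := fun a x => by
          show WithLp.toLp 2 (X *ᵥ (a • x.ofLp)) = _
          rw [Matrix.mulVec_smul]; rfl }
    obtain ⟨μ, hμ⟩ := Module.End.exists_eigenvalue (f.restrict hXSp)
    obtain ⟨w, hw⟩ := hμ.exists_hasEigenvector
    have hw0 : (w : E N) ≠ 0 := fun h => hw.right (Subtype.coe_injective h)
    have heigw : ap X (w : E N) = μ • (w : E N) := by
      have := hw.apply_eq_smul
      exact congrArg Subtype.val this
    -- μ is real
    have hinner_ne : ⟪(w : E N), (w : E N)⟫_ℂ ≠ 0 := fun h => hw0 (inner_self_eq_zero.mp h)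
    have hμreal : (starRingEnd ℂ) μ = μ := by
      have h1 : ⟪ap X (w : E N), (w : E N)⟫_ℂ = ⟪(w : E N), ap X (w : E N)⟫_ℂ :=
        hsymm X hherm _ _
      rw [heigw, inner_smul_left, inner_smul_right] at h1
      exact mul_right_cancel₀ hinner_ne h1
    set r : ℝ := μ.re with hr
    have hμr : (r : ℂ) = μ := by
      rw [hr]
      exact Complex.conj_eq_iff_re.mp hμreal
    -- normalize
    have hnw : ‖(w : E N)‖ ≠ 0 := norm_ne_zero_iff.mpr hw0
    set u : E N := (‖(w : E N)‖⁻¹ : ℂ) • (w : E N) with hu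
    have huSp : u ∈ Sᗮ := Sᗮ.smul_mem _ w.2
    have hTuSp : T u ∈ Sᗮ := by
      rw [hu, T_smul]
      exact Sᗮ.smul_mem _ (hTSp _ w.2)
    have heigu : ap X u = (r : ℂ) • u := by
      rw [hu]
      have : ap X ((‖(w : E N)‖⁻¹ : ℂ) • (w : E N))
          = (‖(w : E N)‖⁻¹ : ℂ) • ap X (w : E N) := by
        show WithLp.toLp 2 (X *ᵥ ((‖(w : E N)‖⁻¹ : ℂ) • (w : E N).ofLp)) = _
        rw [Matrix.mulVec_smul]; rfl
      rw [this, heigw, hμr, smul_comm]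
    have hnormu1 : ‖u‖ = 1 := by
      rw [hu, norm_smul, norm_inv]
      simp only [Complex.norm_real, norm_norm]
      rw [inv_mul_cancel₀ hnw]
    have hnormu : ⟪u, u⟫_ℂ = 1 := by
      rw [inner_self_eq_norm_sq_to_K, hnormu1]
      norm_num
    -- the orthogonality facts
    have huv : ∀ i, ⟪u, v i⟫_ℂ = 0 := by
      intro i
      rw [← inner_conj_symm, huSp _ (hvS i), map_zero]
    have hvu : ∀ i, ⟪v i, u⟫_ℂ = 0 := fun i => huSp _ (hvS i)
    have huTv : ∀ i, ⟪u, T (v i)⟫_ℂ = 0 := by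
      intro i
      rw [← inner_conj_symm, huSp _ (hTvS i), map_zero]
    have hvTu : ∀ i, ⟪v i, T u⟫_ℂ = 0 := fun i => hTuSp _ (hvS i)
    have huTu : ⟪u, T u⟫_ℂ = 0 := inner_self_T u
    -- assemble the new family
    refine ⟨Fin.cons u v, Fin.cons r d, ?_, ?_, ?_⟩
    · intro i
      refine Fin.cases ?_ ?_ i
      · simpa using heigu
      · intro j; simpa using heig j
    · intro i j
      refine Fin.cases ?_ ?_ i <;> [skip; intro i'] <;> refine Fin.cases ?_ ?_ j <;>
        try intro j'
      · simpa using hnormu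
      · simpa [(Fin.succ_ne_zero _).symm] using huv _
      · simpa using hvu _
      · simpa [Fin.succ_inj] using hortho i' _
    · intro i j
      refine Fin.cases ?_ ?_ i <;> [skip; intro i'] <;> refine Fin.cases ?_ ?_ j <;>
        try intro j'
      · simpa using huTu
      · simpa using huTv _
      · simpa using hvTu _
      · simpa using hTortho i' _

lemma inner_T_left (x y : E N) : ⟪T x, y⟫_ℂ =
    (∑ i, x (Sum.inl i) * y (Sum.inr i)) - ∑ i, x (Sum.inr i) * y (Sum.inl i) := by
  simp only [PiLp.inner_apply, RCLike.inner_apply]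
  rw [Fintype.sum_sum_type]
  simp only [T, Tmap, Sum.elim_inl, Sum.elim_inr, map_neg, RingHomCompTriple.comp_apply,
    RingHom.id_apply, starRingEnd_self_apply, neg_mul, Finset.sum_neg_distrib]
  ring_nf
  rw [Finset.sum_neg_distrib]; simp only [mul_comm (y.ofLp _)]; ring

theorem main_part1 (X : Matrix (Fin N ⊕ Fin N) (Fin N ⊕ Fin N) ℂ)
    (hherm : Xᴴ = X) (hsd : dual X = X) :
    ∃ (U : Matrix (Fin N ⊕ Fin N) (Fin N ⊕ Fin N) ℂ) (D : Matrix (Fin N) (Fin N) ℝ),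
      U ∈ Matrix.unitaryGroup (Fin N ⊕ Fin N) ℂ ∧
      Uᵀ * Zmat N * U = Zmat N ∧
      D.IsDiag ∧
      X = U * Matrix.fromBlocks (D.map Complex.ofReal) 0 0 (D.map Complex.ofReal) * Uᴴ := by
  classical
  obtain ⟨v, d, heig, hortho, hTortho⟩ := exists_family X hherm hsd N le_rfl
  set col : Fin N ⊕ Fin N → E N := Sum.elim v (fun i => T (v i)) with hcol
  set U : Matrix (Fin N ⊕ Fin N) (Fin N ⊕ Fin N) ℂ := Matrix.of (fun p q => col q p) with hU
  set dd : Fin N ⊕ Fin N → ℂ :=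
    Sum.elim (fun i => ((d i : ℝ) : ℂ)) (fun i => ((d i : ℝ) : ℂ)) with hdd
  -- derived orthogonality
  have hTvv : ∀ i j, ⟪T (v i), v j⟫_ℂ = 0 := by
    intro i j
    rw [← inner_conj_symm, hTortho j i, map_zero]
  have hTvTv : ∀ i j, ⟪T (v i), T (v j)⟫_ℂ = if i = j then 1 else 0 := by
    intro i j
    rw [inner_T_T, hortho j i]
    simp [eq_comm]
  -- unitarity
  have hentry : ∀ p q, (Uᴴ * U) p q = ⟪col p, col q⟫_ℂ := by
    intro p q
    simp [Matrix.mul_apply, Matrix.conjTranspose_apply, hU, PiLp.inner_apply,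
      RCLike.inner_apply, Matrix.of_apply]
    congr 1 <;> exact Finset.sum_congr rfl fun _ _ => mul_comm _ _
  have hUHU : Uᴴ * U = 1 := by
    ext p q
    rw [hentry, Matrix.one_apply]
    cases p with
    | inl i => cases q with
      | inl j => simpa [hcol] using hortho i j
      | inr j => simpa [hcol] using hTortho i j
    | inr i => cases q with
      | inl j => simpa [hcol] using hTvv i j
      | inr j => simpa [hcol] using hTvTv i j
  have hUmem : U ∈ Matrix.unitaryGroup (Fin N ⊕ Fin N) ℂ := by
    rw [Matrix.mem_unitaryGroup_iff, mul_eq_one_comm]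
    rw [Matrix.star_eq_conjTranspose]
    exact hUHU
  have hUUH : U * Uᴴ = 1 := by
    rw [mul_eq_one_comm]
    exact hUHU
  -- symplectic condition
  have hZU1 : ∀ q i, (Zmat N * U) (Sum.inl i) q = U (Sum.inr i) q := by
    intro q i
    rw [Matrix.mul_apply, Fintype.sum_sum_type]
    simp [Zmat, Matrix.one_apply, ite_mul, Finset.sum_ite_eq]
  have hZU2 : ∀ q i, (Zmat N * U) (Sum.inr i) q = -U (Sum.inl i) q := by
    intro q i
    rw [Matrix.mul_apply, Fintype.sum_sum_type]
    simp [Zmat, Matrix.one_apply, ite_mul, Finset.sum_ite_eq]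
  have hsymp_entry : ∀ p q, (Uᵀ * Zmat N * U) p q = ⟪T (col p), col q⟫_ℂ := by
    intro p q
    rw [Matrix.mul_assoc, Matrix.mul_apply, Fintype.sum_sum_type, inner_T_left]
    simp only [Matrix.transpose_apply, hZU1, hZU2]
    have h1 : ∀ a, U a p = col p a := fun a => rfl
    have h2 : ∀ a, U a q = col q a := fun a => rfl
    simp only [h1, h2, mul_neg, Finset.sum_neg_distrib]
    ring
  have hsymp : Uᵀ * Zmat N * U = Zmat N := by
    ext p q
    rw [hsymp_entry]
    cases p with
    | inl i => cases q with
      | inl j =>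
        rw [hcol, Sum.elim_inl, Sum.elim_inl, hTvv i j]
        simp [Zmat]
      | inr j =>
        rw [hcol, Sum.elim_inl, Sum.elim_inr, hTvTv i j]
        simp [Zmat, Matrix.one_apply]
    | inr i => cases q with
      | inl j =>
        rw [hcol, Sum.elim_inr, Sum.elim_inl, T_T, inner_neg_left, hortho i j]
        simp [Zmat, Matrix.one_apply, apply_ite]
      | inr j =>
        rw [hcol, Sum.elim_inr, Sum.elim_inr, T_T, inner_neg_left, hTortho i j]
        simp [Zmat]
  -- X U = U M
  have hXU : X * U = U * Matrix.diagonal dd := by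
    ext p q
    have hL : (X * U) p q = ap X (col q) p := by
      rw [Matrix.mul_apply]; rfl
    rw [hL, Matrix.mul_diagonal]
    cases q with
    | inl j =>
      rw [hcol, Sum.elim_inl, heig j, hdd]
      simp [hU, hcol, mul_comm]
    | inr j =>
      have : ap X (T (v j)) = ((d j : ℝ) : ℂ) • T (v j) := by
        rw [ap_T X hherm hsd, heig j, T_smul, Complex.conj_ofReal]
      rw [hcol, Sum.elim_inr, this, hdd]
      simp [hU, hcol, mul_comm]
  have hXdecomp : X = U * Matrix.diagonal dd * Uᴴ := by
    calc X = X * (U * Uᴴ) := by rw [hUUH, Matrix.mul_one]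
      _ = (X * U) * Uᴴ := by rw [Matrix.mul_assoc]
      _ = U * Matrix.diagonal dd * Uᴴ := by rw [hXU]
  refine ⟨U, Matrix.diagonal d, hUmem, hsymp, Matrix.isDiag_diagonal d, ?_⟩
  rw [Matrix.diagonal_map Complex.ofReal_zero, Matrix.fromBlocks_diagonal]
  exact hXdecomp


theorem main_part2 (X : Matrix (Fin N ⊕ Fin N) (Fin N ⊕ Fin N) ℂ)
    (hherm : Xᴴ = X) (hsd : dual X = X) (μ : ℂ) :
    Even (Module.finrank ℂ (Module.End.eigenspace (Matrix.toLin' X) μ)) := by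
  classical
  obtain ⟨U, D, hmem, hsymp, hdiag, hdecomp⟩ := main_part1 X hherm hsd
  set c : Fin N → ℂ := fun i => ((D i i : ℝ) : ℂ) with hc
  set dd : Fin N ⊕ Fin N → ℂ := Sum.elim c c with hdd
  have hM : Matrix.fromBlocks (D.map Complex.ofReal) 0 0 (D.map Complex.ofReal)
      = Matrix.diagonal dd := by
    conv_lhs => rw [← hdiag.diagonal_diag]
    rw [Matrix.diagonal_map Complex.ofReal_zero, Matrix.fromBlocks_diagonal]
    rfl
  have hU1 := Unitary.mem_iff.mp hmem
  have hUHU : Uᴴ * U = 1 := by rw [← Matrix.star_eq_conjTranspose]; exact hU1.1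
  have hUUH : U * Uᴴ = 1 := by rw [← Matrix.star_eq_conjTranspose]; exact hU1.2
  have hdetU : IsUnit U.det :=
    IsUnit.of_mul_eq_one _ (by rw [← Matrix.det_mul, hUUH, Matrix.det_one])
  have hdetUH : IsUnit (Uᴴ).det :=
    IsUnit.of_mul_eq_one _ (by rw [← Matrix.det_mul, hUHU, Matrix.det_one])
  -- eigenspace as kernel
  have hker : Module.End.eigenspace (Matrix.toLin' X) μ
      = LinearMap.ker (Matrix.toLin' (X - μ • 1)) := by
    ext x
    rw [Module.End.mem_eigenspace_iff, LinearMap.mem_ker, map_sub, _root_.map_smul, Matrix.toLin'_one]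
    simp only [LinearMap.sub_apply, LinearMap.smul_apply, LinearMap.id_apply, sub_eq_zero]
  -- conjugation
  have hXsub : X - μ • 1 = U * (Matrix.diagonal dd - μ • 1) * Uᴴ := by
    rw [Matrix.mul_sub, Matrix.sub_mul, ← hM, ← hdecomp, Matrix.mul_smul, Matrix.mul_one,
      Matrix.smul_mul, hUUH]
  have hrank : (X - μ • 1).rank = (Matrix.diagonal dd - μ • 1).rank := by
    rw [hXsub, Matrix.rank_mul_eq_left_of_isUnit_det (Uᴴ) _ hdetUH,
      Matrix.rank_mul_eq_right_of_isUnit_det U _ hdetU]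
  set w : Fin N ⊕ Fin N → ℂ := fun k => dd k - μ with hw
  have hdiag2 : Matrix.diagonal dd - μ • 1 = Matrix.diagonal w := by
    ext p q
    by_cases h : p = q <;>
      simp [Matrix.sub_apply, Matrix.smul_apply, Matrix.diagonal_apply, Matrix.one_apply, h, hw]
  -- rank-nullity
  have hrn := LinearMap.finrank_range_add_finrank_ker (Matrix.toLin' (X - μ • 1))
  have hfr : Module.finrank ℂ (Fin N ⊕ Fin N → ℂ) = N + N := by
    rw [Module.finrank_fintype_fun_eq_card, Fintype.card_sum, Fintype.card_fin]
  have hrange : Module.finrank ℂ (LinearMap.range (Matrix.toLin' (X - μ • 1)))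
      = (X - μ • 1).rank := by
    have he : Matrix.toLin' (X - μ • 1) = (X - μ • 1).mulVecLin :=
      LinearMap.ext fun x => rfl
    rw [he]; rfl
  have hrankdiag : (X - μ • 1).rank = Fintype.card {k // w k ≠ 0} := by
    rw [hrank, hdiag2, Matrix.rank_diagonal]
  -- cardinal bookkeeping
  have hcards : Fintype.card {k // w k ≠ 0} + Fintype.card {k // w k = 0}
      = Fintype.card (Fin N ⊕ Fin N) := by
    have h1 := Fintype.card_subtype_compl (fun k : Fin N ⊕ Fin N => w k ≠ 0)
    have h2 := Fintype.card_subtype_le (fun k : Fin N ⊕ Fin N => w k ≠ 0)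
    have h3 : Fintype.card {k // ¬ w k ≠ 0} = Fintype.card {k // w k = 0} :=
      Fintype.card_congr (Equiv.subtypeEquivRight fun x => not_not)
    omega
  have hcardsum : Fintype.card (Fin N ⊕ Fin N) = N + N := by
    rw [Fintype.card_sum, Fintype.card_fin]
  have hkerdim : Module.finrank ℂ (LinearMap.ker (Matrix.toLin' (X - μ • 1)))
      = Fintype.card {k // w k = 0} := by
    rw [hrange, hrankdiag] at hrn
    omega
  have hsplit : Fintype.card {k // w k = 0}
      = Fintype.card {i // w (Sum.inl i) = 0} + Fintype.card {i // w (Sum.inr i) = 0} := by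
    rw [Fintype.card_congr (Equiv.subtypeSum (p := fun k => w k = 0)), Fintype.card_sum]
  have hsame : Fintype.card {i // w (Sum.inl i) = 0} = Fintype.card {i // w (Sum.inr i) = 0} :=
    Fintype.card_congr (Equiv.subtypeEquivRight fun x => by rw [hw, hdd]; simp)
  rw [hker, hkerdim, hsplit, hsame]
  exact ⟨_, rfl⟩

end KAux

theorem hermitian_self_dual_diagonalization {N : ℕ}
    (X : Matrix (Fin N ⊕ Fin N) (Fin N ⊕ Fin N) ℂ) (hherm : Xᴴ = X) (hsd : dual X = X) :
    (∃ (U : Matrix (Fin N ⊕ Fin N) (Fin N ⊕ Fin N) ℂ) (D : Matrix (Fin N) (Fin N) ℝ),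
      U ∈ Matrix.unitaryGroup (Fin N ⊕ Fin N) ℂ ∧
      Uᵀ * Zmat N * U = Zmat N ∧
      D.IsDiag ∧
      X = U * Matrix.fromBlocks (D.map Complex.ofReal) 0 0 (D.map Complex.ofReal) * Uᴴ) ∧
    ∀ μ : ℂ, Even (Module.finrank ℂ (Module.End.eigenspace (Matrix.toLin' X) μ)) := by
  exact ⟨KAux.main_part1 X hherm hsd, fun μ => KAux.main_part2 X hherm hsd μ⟩
end

section
/- If X is a 2N×2N complex matrix with X^♯ = X* and (X - λI)^r v = 0 while (X - λI)^{r-1} v ≠ 0, then (X - conj(λ)I)^r 𝒯v = 0 and (X - conj(λ)I)^{r-1} 𝒯v ≠ 0. -/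
open Matrix

lemma Zt {N : ℕ} : (Zmat N)ᵀ = -(Zmat N) := by
  simp [Zmat, Matrix.fromBlocks_transpose]
  ext i j
  rcases i with i | i <;> rcases j with j | j <;> simp [Matrix.fromBlocks]

lemma ZZ {N : ℕ} : Zmat N * Zmat N = -1 := by
  simp [Zmat, Matrix.fromBlocks_multiply]
  ext i j
  rcases i with i | i <;> rcases j with j | j <;> simp [Matrix.fromBlocks, Matrix.one_apply]

lemma key {N : ℕ} (X : Matrix (Fin N ⊕ Fin N) (Fin N ⊕ Fin N) ℂ) (hX : dual X = Xᴴ) :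
    X * Zmat N = Zmat N * X.map (starRingEnd ℂ) := by
  have h2 : -(Zmat N) * (X * Zmat N) = X.map (starRingEnd ℂ) := by
    have h := congrArg Matrix.transpose hX
    simp only [dual, Matrix.transpose_mul, Matrix.transpose_neg, Zt,
      Matrix.transpose_transpose, neg_neg] at h
    rw [h]
    ext i j
    simp [Matrix.conjTranspose_apply]
  calc X * Zmat N = -(Zmat N * Zmat N) * (X * Zmat N) := by rw [ZZ]; simp
    _ = Zmat N * (-(Zmat N) * (X * Zmat N)) := by
        simp [Matrix.mul_assoc, Matrix.neg_mul, Matrix.mul_neg]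
    _ = Zmat N * X.map (starRingEnd ℂ) := by rw [h2]

lemma Tmap_eq {N : ℕ} (w : Fin N ⊕ Fin N → ℂ) :
    Tmap w = (-(Zmat N)).mulVec (fun j => (starRingEnd ℂ) (w j)) := by
  funext j
  rcases j with j | j <;>
    simp [Tmap, Zmat, Matrix.mulVec, dotProduct, Matrix.fromBlocks,
      Fintype.sum_sum_type, Matrix.one_apply, apply_ite, Finset.sum_ite_eq']

lemma map_star_mulVec {N : ℕ} (M : Matrix (Fin N ⊕ Fin N) (Fin N ⊕ Fin N) ℂ)
    (w : Fin N ⊕ Fin N → ℂ) :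
    (M.map (starRingEnd ℂ)).mulVec (fun j => (starRingEnd ℂ) (w j)) =
      fun j => (starRingEnd ℂ) (M.mulVec w j) := by
  funext j
  simp [Matrix.mulVec, dotProduct, map_sum]

lemma intertwine {N : ℕ} (X : Matrix (Fin N ⊕ Fin N) (Fin N ⊕ Fin N) ℂ)
    (hX : dual X = Xᴴ) (lam : ℂ) (w : Fin N ⊕ Fin N → ℂ) :
    (X - (starRingEnd ℂ) lam • 1).mulVec (Tmap w) = Tmap ((X - lam • 1).mulVec w) := by
  rw [Tmap_eq, Tmap_eq]
  have hmap : (X - lam • 1).map (starRingEnd ℂ) = X.map (starRingEnd ℂ) - (starRingEnd ℂ) lam • 1 := by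
    ext i j
    by_cases hij : i = j <;>
      simp [Matrix.map_apply, Matrix.sub_apply, Matrix.one_apply, hij, mul_comm]
  have hm : (X - (starRingEnd ℂ) lam • 1) * (-(Zmat N)) =
      (-(Zmat N)) * ((X - lam • 1).map (starRingEnd ℂ)) := by
    rw [hmap, Matrix.sub_mul, Matrix.mul_sub, Matrix.neg_mul, Matrix.mul_neg,
      Matrix.neg_mul, key X hX]
    simp [Matrix.smul_mul, Matrix.mul_smul, sub_eq_add_neg]
  rw [Matrix.mulVec_mulVec, hm, ← Matrix.mulVec_mulVec, map_star_mulVec]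

lemma iter {N : ℕ} (X : Matrix (Fin N ⊕ Fin N) (Fin N ⊕ Fin N) ℂ)
    (hX : dual X = Xᴴ) (lam : ℂ) (k : ℕ) (w : Fin N ⊕ Fin N → ℂ) :
    ((X - (starRingEnd ℂ) lam • 1) ^ k).mulVec (Tmap w) =
      Tmap (((X - lam • 1) ^ k).mulVec w) := by
  induction k generalizing w with
  | zero => simp
  | succ k ih =>
      rw [pow_succ, pow_succ, ← Matrix.mulVec_mulVec, ← Matrix.mulVec_mulVec,
        intertwine X hX, ih]

lemma Tmap_zero_iff {N : ℕ} (w : Fin N ⊕ Fin N → ℂ) : Tmap w = 0 ↔ w = 0 := by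
  constructor
  · intro h
    funext j
    rcases j with j | j
    · have := congrFun h (Sum.inr j)
      simpa [Tmap] using this
    · have := congrFun h (Sum.inl j)
      simpa [Tmap, neg_eq_zero] using this
  · rintro rfl
    funext j; rcases j with j | j <;> simp [Tmap]

theorem generalized_eigenvector_pairing {N : ℕ}
    (X : Matrix (Fin N ⊕ Fin N) (Fin N ⊕ Fin N) ℂ) (hX : dual X = Xᴴ)
    (lam : ℂ) (r : ℕ) (v : Fin N ⊕ Fin N → ℂ)
    (h1 : ((X - lam • 1) ^ r).mulVec v = 0)
    (h2 : ((X - lam • 1) ^ (r - 1)).mulVec v ≠ 0) :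
    ((X - (starRingEnd ℂ) lam • 1) ^ r).mulVec (Tmap v) = 0 ∧
    ((X - (starRingEnd ℂ) lam • 1) ^ (r - 1)).mulVec (Tmap v) ≠ 0 := by
  constructor
  · rw [iter X hX, h1, (Tmap_zero_iff 0).mpr rfl]
  · rw [iter X hX]
    intro h
    exact h2 ((Tmap_zero_iff _).mp h)
end

section
/- If v and w are orthogonal unit vectors in ℂ^{2N}, then the matrix V = (𝒯v)w* - (𝒯w)v* is a self-dual partial isometry of rank two sending w to 𝒯v and v to -𝒯w. -/
open Matrix

section helpers

variable {m : Type*} [Fintype m]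

lemma vmv_mul (a b c d : m → ℂ) :
    vecMulVec a b * vecMulVec c d = (b ⬝ᵥ c) • vecMulVec a d := by
  ext i j
  simp only [mul_apply, vecMulVec_apply, Matrix.smul_apply, dotProduct, Finset.sum_mul, smul_eq_mul]
  exact Finset.sum_congr rfl fun k _ => by ring

lemma vmv_mulVec (a b x : m → ℂ) : (vecMulVec a b).mulVec x = (b ⬝ᵥ x) • a := by
  ext i
  simp only [mulVec, dotProduct, vecMulVec_apply, Pi.smul_apply, smul_eq_mul, Finset.sum_mul]
  exact Finset.sum_congr rfl fun k _ => by ring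

lemma vmv_conjT (a b : m → ℂ) : (vecMulVec a b)ᴴ = vecMulVec (star b) (star a) := by
  ext i j
  simp [vecMulVec_apply, mul_comm]

lemma inner_eq_dot (x y : EuclideanSpace ℂ m) :
    (inner ℂ x y : ℂ) = star (x : m → ℂ) ⬝ᵥ (y : m → ℂ) := by
  simp [PiLp.inner_apply, dotProduct, mul_comm]

end helpers

lemma Tdot {N : ℕ} (ξ η : Fin N ⊕ Fin N → ℂ) :
    star (Tmap ξ) ⬝ᵥ Tmap η = star η ⬝ᵥ ξ := by
  simp only [dotProduct, Fintype.sum_sum_type, Tmap, Sum.elim_inl, Sum.elim_inr, Pi.star_apply,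
    star_neg, RCLike.star_def, starRingEnd_self_apply, neg_mul, neg_neg]
  rw [add_comm]
  congr 1 <;> exact Finset.sum_congr rfl fun k _ => by simp [mul_comm]

theorem kramers_partial_isometry {N : ℕ} (v w : EuclideanSpace ℂ (Fin N ⊕ Fin N))
    (hv : ‖v‖ = 1) (hw : ‖w‖ = 1) (hvw : (inner ℂ v w : ℂ) = 0) :
    let V : Matrix (Fin N ⊕ Fin N) (Fin N ⊕ Fin N) ℂ :=
      Matrix.vecMulVec (Tmap v) (star w) - Matrix.vecMulVec (Tmap w) (star v)
    dual V = V ∧ V * Vᴴ * V = V ∧ V.rank = 2 ∧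
      V.mulVec w = Tmap v ∧ V.mulVec v = -(Tmap w) := by
  intro V
  have hvv : star (v : Fin N ⊕ Fin N → ℂ) ⬝ᵥ (v : Fin N ⊕ Fin N → ℂ) = 1 := by
    rw [← inner_eq_dot, inner_self_eq_norm_sq_to_K, hv]; norm_num
  have hww : star (w : Fin N ⊕ Fin N → ℂ) ⬝ᵥ (w : Fin N ⊕ Fin N → ℂ) = 1 := by
    rw [← inner_eq_dot, inner_self_eq_norm_sq_to_K, hw]; norm_num
  have hvw1 : star (v : Fin N ⊕ Fin N → ℂ) ⬝ᵥ (w : Fin N ⊕ Fin N → ℂ) = 0 := by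
    rw [← inner_eq_dot]; exact hvw
  have hvw2 : star (w : Fin N ⊕ Fin N → ℂ) ⬝ᵥ (v : Fin N ⊕ Fin N → ℂ) = 0 := by
    have := congrArg (starRingEnd ℂ) hvw1
    simpa [dotProduct, map_sum, mul_comm] using this
  have hTvv : star (Tmap (v : Fin N ⊕ Fin N → ℂ)) ⬝ᵥ Tmap (v : Fin N ⊕ Fin N → ℂ) = 1 := by
    rw [Tdot]; exact hvv
  have hTww : star (Tmap (w : Fin N ⊕ Fin N → ℂ)) ⬝ᵥ Tmap (w : Fin N ⊕ Fin N → ℂ) = 1 := by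
    rw [Tdot]; exact hww
  have hTvw : star (Tmap (v : Fin N ⊕ Fin N → ℂ)) ⬝ᵥ Tmap (w : Fin N ⊕ Fin N → ℂ) = 0 := by
    rw [Tdot]; exact hvw2
  have hTwv : star (Tmap (w : Fin N ⊕ Fin N → ℂ)) ⬝ᵥ Tmap (v : Fin N ⊕ Fin N → ℂ) = 0 := by
    rw [Tdot]; exact hvw1
  have hVw : V.mulVec w = Tmap v := by
    simp [V, sub_mulVec, vmv_mulVec, hww, hvw1]
  have hVv : V.mulVec v = -(Tmap w) := by
    simp [V, sub_mulVec, vmv_mulVec, hvv, hvw2]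
  have hVH : Vᴴ = vecMulVec (w : Fin N ⊕ Fin N → ℂ) (star (Tmap v))
      - vecMulVec (v : Fin N ⊕ Fin N → ℂ) (star (Tmap w)) := by
    simp [V, conjTranspose_sub, vmv_conjT]
  have hiso : V * Vᴴ * V = V := by
    have hVV : V = vecMulVec (Tmap (v : Fin N ⊕ Fin N → ℂ)) (star (w : Fin N ⊕ Fin N → ℂ))
        - vecMulVec (Tmap (w : Fin N ⊕ Fin N → ℂ)) (star (v : Fin N ⊕ Fin N → ℂ)) := rfl
    rw [hVH, hVV]
    simp only [sub_mul, mul_sub, add_mul, vmv_mul, smul_mul_assoc, mul_smul_comm, smul_smul,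
      hww, hvv, hvw1, hvw2, hTvv, hTww, hTvw, hTwv, one_smul, zero_smul, smul_zero,
      sub_zero, zero_sub, sub_neg_eq_add, neg_zero, add_zero, zero_add, neg_neg, mul_one,
      mul_zero, zero_mul, one_mul]
  have hdual : dual V = V := by
    ext i j
    cases i <;> cases j <;>
      simp [dual, Zmat, V, Tmap, mul_apply, fromBlocks, vecMulVec_apply,
        Fintype.sum_sum_type, one_apply, Finset.sum_ite_eq, Finset.sum_ite_eq',
        Finset.mul_sum, Finset.sum_mul, transpose_apply] <;> ring
  have hrank : V.rank = 2 := by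
    have hrange : LinearMap.range V.mulVecLin
        = Submodule.span ℂ {Tmap (v : Fin N ⊕ Fin N → ℂ), Tmap (w : Fin N ⊕ Fin N → ℂ)} := by
      apply le_antisymm
      · rintro x ⟨y, rfl⟩
        rw [Submodule.mem_span_pair]
        refine ⟨star (w : Fin N ⊕ Fin N → ℂ) ⬝ᵥ y, -(star (v : Fin N ⊕ Fin N → ℂ) ⬝ᵥ y), ?_⟩
        simp [V, mulVecLin_apply, sub_mulVec, vmv_mulVec, neg_mulVec, sub_eq_add_neg]
      · rw [Submodule.span_le]
        rintro x hx
        rcases hx with rfl | rfl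
        · exact ⟨w, by simpa [mulVecLin_apply] using hVw⟩
        · refine ⟨-(v : Fin N ⊕ Fin N → ℂ), ?_⟩
          rw [mulVecLin_apply, Matrix.mulVec_neg, hVv, neg_neg]
    have hli : LinearIndependent ℂ
        ![Tmap (v : Fin N ⊕ Fin N → ℂ), Tmap (w : Fin N ⊕ Fin N → ℂ)] := by
      rw [LinearIndependent.pair_iff]
      intro s t hst
      have h1 := congrArg (fun z => star (Tmap (v : Fin N ⊕ Fin N → ℂ)) ⬝ᵥ z) hst
      have h2 := congrArg (fun z => star (Tmap (w : Fin N ⊕ Fin N → ℂ)) ⬝ᵥ z) hst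
      simp only [dotProduct_add, dotProduct_smul, hTvv, hTvw, hTwv, hTww,
        smul_eq_mul, mul_one, mul_zero, add_zero, zero_add, dotProduct_zero] at h1 h2
      exact ⟨h1, h2⟩
    have hcard := finrank_span_eq_card hli
    rw [Matrix.rank, hrange]
    have : (Set.range ![Tmap (v : Fin N ⊕ Fin N → ℂ), Tmap (w : Fin N ⊕ Fin N → ℂ)])
        = {Tmap (v : Fin N ⊕ Fin N → ℂ), Tmap (w : Fin N ⊕ Fin N → ℂ)} := by
      simp only [Matrix.range_cons, Matrix.range_empty, Set.union_empty,
        Set.union_singleton, Set.singleton_union]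
      exact Set.pair_comm _ _
    rw [← this]
    simpa using hcard
  exact ⟨hdual, hiso, hrank, hVw, hVv⟩
end
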